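/- arXiv:math/9912215 — 6 statements merged into one kernel-verified Lean document; each statement's English description precedes it below -/
import Mathlib

section
/- Simplified negligibility test for the special Colombeau algebra: Let Ω ⊆ ℝ^s be open and let (u_ε)_{ε∈(0,1]} be a family of smooth functions u_ε : Ω → ℂ which is moderate, i.e. for every compact K ⊆ Ω and every order n ∈ ℕ there exists N ∈ ℕ with sup_{x∈K} ‖iteratedFDeriv n u_ε (x)‖ = O(ε^{-N}) as ε → 0⁺. If for every compact K ⊆ Ω and every m ∈ ℕ one has sup_{x∈K} |u_ε(x)| = O(ε^m) as ε → 0⁺, then the family is negligible: for every compact K ⊆ Ω, every order n ∈ ℕ and every m ∈ ℕ, sup_{x∈K} ‖iteratedFDeriv n u_ε (x)‖ = O(ε^m) as ε → 0⁺. -/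
open Set

open Metric in
private lemma diffAt_iter {E F : Type*} [NormedAddCommGroup E] [NormedSpace ℝ E]
    [NormedAddCommGroup F] [NormedSpace ℝ F] {f : E → F} {Ω : Set E}
    (hΩ : IsOpen Ω) (hf : ContDiffOn ℝ (⊤:ℕ∞) f Ω) (k : ℕ) {y : E} (hy : y ∈ Ω) :
    DifferentiableAt ℝ (iteratedFDeriv ℝ k f) y := by
  have h1 : DifferentiableOn ℝ (iteratedFDerivWithin ℝ k f Ω) Ω :=
    hf.differentiableOn_iteratedFDerivWithin
      (by exact_mod_cast lt_top_iff_ne_top.2 (by simp)) hΩ.uniqueDiffOn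
  have h2 : DifferentiableWithinAt ℝ (iteratedFDeriv ℝ k f) Ω y :=
    (h1 y hy).congr (fun z hz => (iteratedFDerivWithin_of_isOpen k hΩ hz).symm)
      ((iteratedFDerivWithin_of_isOpen k hΩ hy).symm)
  exact h2.differentiableAt (hΩ.mem_nhds hy)

private lemma norm_fderiv_iter {E F : Type*} [NormedAddCommGroup E] [NormedSpace ℝ E]
    [NormedAddCommGroup F] [NormedSpace ℝ F] {f : E → F} (k : ℕ) (x : E) :
    ‖fderiv ℝ (iteratedFDeriv ℝ k f) x‖ = ‖iteratedFDeriv ℝ (k+1) f x‖ := by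
  rw [show fderiv ℝ (iteratedFDeriv ℝ k f) x =
    (continuousMultilinearCurryLeftEquiv ℝ (fun _ : Fin (k+1) => E) F)
      (iteratedFDeriv ℝ (k+1) f x) from congrFun fderiv_iteratedFDeriv x]
  exact LinearIsometryEquiv.norm_map _ _

open Metric in
private lemma core_est {E F : Type*} [NormedAddCommGroup E] [NormedSpace ℝ E]
    [NormedAddCommGroup F] [NormedSpace ℝ F]
    (g : E → F) (x : E) (h M₀ M₂ : ℝ) (hh : 0 < h) (hM₂0 : 0 ≤ M₂)
    (hg : ∀ y ∈ closedBall x h, DifferentiableAt ℝ g y)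
    (hM₀ : ∀ y ∈ closedBall x h, ‖g y‖ ≤ M₀)
    (hlip : ∀ y ∈ closedBall x h, ‖fderiv ℝ g y - fderiv ℝ g x‖ ≤ M₂) :
    ‖fderiv ℝ g x‖ ≤ 2 * M₀ / h + M₂ := by
  have hx : x ∈ closedBall x h := mem_closedBall_self hh.le
  have hM₀0 : 0 ≤ M₀ := le_trans (norm_nonneg _) (hM₀ x hx)
  set L := fderiv ℝ g x with hL
  refine ContinuousLinearMap.opNorm_le_bound _ (by positivity) fun v => ?_
  rcases eq_or_ne v 0 with rfl | hv0
  · simp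
  have hv : 0 < ‖v‖ := norm_pos_iff.mpr hv0
  set w := (h / ‖v‖) • v with hw
  have hwn : ‖w‖ = h := by
    rw [hw, norm_smul, Real.norm_eq_abs, abs_of_pos (div_pos hh hv)]
    field_simp
  have hxw : x + w ∈ closedBall x h := by
    simp [mem_closedBall, dist_self_add_left, hwn]
  have hφ : ∀ y ∈ closedBall x h,
      HasFDerivWithinAt (fun y => g y - L (y - x)) (fderiv ℝ g y - L) (closedBall x h) y := by
    intro y hy
    have h1 : HasFDerivAt (fun y : E => L (y - x)) L y := by
      simpa [map_sub] using (L.hasFDerivAt (x := y)).sub_const (L x)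
    exact (((hg y hy).hasFDerivAt).sub h1).hasFDerivWithinAt
  have key := (convex_closedBall x h).norm_image_sub_le_of_norm_hasFDerivWithin_le
    hφ hlip hx hxw
  have e1 : (fun y => g y - L (y - x)) (x + w) - (fun y => g y - L (y - x)) x
      = g (x + w) - g x - L w := by simp; abel
  rw [e1] at key
  have hdist : ‖x + w - x‖ = h := by simpa using hwn
  rw [hdist] at key
  have hLw : ‖L w‖ ≤ 2 * M₀ + M₂ * h := by
    have t1 : ‖L w‖ = ‖(g (x + w) - g x) - (g (x + w) - g x - L w)‖ := by congr 1; abel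
    calc ‖L w‖ = ‖(g (x + w) - g x) - (g (x + w) - g x - L w)‖ := t1
      _ ≤ ‖g (x + w) - g x‖ + ‖g (x + w) - g x - L w‖ := norm_sub_le _ _
      _ ≤ (‖g (x + w)‖ + ‖g x‖) + M₂ * h := add_le_add (norm_sub_le _ _) key
      _ ≤ (M₀ + M₀) + M₂ * h := by gcongr <;> [exact hM₀ _ hxw; exact hM₀ _ hx]
      _ = 2 * M₀ + M₂ * h := by ring
  have hLwv : ‖L w‖ = h / ‖v‖ * ‖L v‖ := by
    rw [hw, map_smul, norm_smul, Real.norm_eq_abs, abs_of_pos (div_pos hh hv)]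
  have : ‖L v‖ = ‖v‖ / h * ‖L w‖ := by
    rw [hLwv]; field_simp
  rw [this]
  calc ‖v‖ / h * ‖L w‖ ≤ ‖v‖ / h * (2 * M₀ + M₂ * h) := by
        gcongr
    _ = (2 * M₀ / h + M₂) * ‖v‖ := by field_simp

/-- **Simplified negligibility test for the special Colombeau algebra.**
If a moderate family `(u ε)` of smooth functions on an open set `Ω ⊆ ℝ^s` satisfies
the zeroth-order negligibility estimates on every compact subset, then it satisfies
the negligibility estimates for all derivatives. -/
theorem simplified_negligibility_special_algebra {s : ℕ}
    (Ω : Set (Fin s → ℝ)) (hΩ : IsOpen Ω)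
    (u : ℝ → (Fin s → ℝ) → ℂ)
    (hsmooth : ∀ ε ∈ Ioc (0:ℝ) 1, ContDiffOn ℝ (⊤ : ℕ∞) (u ε) Ω)
    (hmoderate : ∀ K : Set (Fin s → ℝ), K ⊆ Ω → IsCompact K → ∀ n : ℕ,
      ∃ N : ℕ, ∃ C > (0:ℝ), ∃ ε₀ ∈ Ioc (0:ℝ) 1, ∀ ε ∈ Ioo (0:ℝ) ε₀, ∀ x ∈ K,
        ‖iteratedFDeriv ℝ n (u ε) x‖ ≤ C * ε ^ (-(N:ℝ)))
    (hzero : ∀ K : Set (Fin s → ℝ), K ⊆ Ω → IsCompact K → ∀ m : ℕ,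
      ∃ C > (0:ℝ), ∃ ε₀ ∈ Ioc (0:ℝ) 1, ∀ ε ∈ Ioo (0:ℝ) ε₀, ∀ x ∈ K,
        ‖u ε x‖ ≤ C * ε ^ (m:ℝ)) :
    ∀ K : Set (Fin s → ℝ), K ⊆ Ω → IsCompact K → ∀ n : ℕ, ∀ m : ℕ,
      ∃ C > (0:ℝ), ∃ ε₀ ∈ Ioc (0:ℝ) 1, ∀ ε ∈ Ioo (0:ℝ) ε₀, ∀ x ∈ K,
        ‖iteratedFDeriv ℝ n (u ε) x‖ ≤ C * ε ^ (m:ℝ) := by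
  suffices H : ∀ n : ℕ, ∀ K : Set (Fin s → ℝ), K ⊆ Ω → IsCompact K → ∀ m : ℕ,
      ∃ C > (0:ℝ), ∃ ε₀ ∈ Ioc (0:ℝ) 1, ∀ ε ∈ Ioo (0:ℝ) ε₀, ∀ x ∈ K,
        ‖iteratedFDeriv ℝ n (u ε) x‖ ≤ C * ε ^ (m:ℝ) by
    intro K h1 h2 n m; exact H n K h1 h2 m
  intro n
  induction n with
  | zero =>
    intro K hKΩ hK m
    obtain ⟨C, hC, ε₀, hε₀, hb⟩ := hzero K hKΩ hK m
    exact ⟨C, hC, ε₀, hε₀, fun ε hε x hx => by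
      rw [norm_iteratedFDeriv_zero]; exact hb ε hε x hx⟩
  | succ n IH =>
    intro K hKΩ hK m
    obtain ⟨r, hr, hrΩ⟩ := hK.exists_cthickening_subset_open hΩ hKΩ
    have hK' : IsCompact (Metric.cthickening r K) := hK.cthickening
    obtain ⟨N, C₂, hC₂, ε₂, hε₂, hmod⟩ := hmoderate _ hrΩ hK' (n+2)
    obtain ⟨C₀, hC₀, ε₁, hε₁, hIH⟩ := IH _ hrΩ hK' (2*m + N + 2)
    refine ⟨2*C₀ + C₂, by positivity, min ε₂ (min ε₁ (min r 1)), ⟨?_, ?_⟩, ?_⟩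
    · exact lt_min hε₂.1 (lt_min hε₁.1 (lt_min hr one_pos))
    · exact (min_le_right _ _).trans ((min_le_right _ _).trans (min_le_right _ _))
    rintro ε ⟨hε0, hεU⟩ x hx
    have hεε₂ : ε < ε₂ := hεU.trans_le (min_le_left _ _)
    have hεε₁ : ε < ε₁ := hεU.trans_le ((min_le_right _ _).trans (min_le_left _ _))
    have hεr : ε < r := hεU.trans_le
      ((min_le_right _ _).trans ((min_le_right _ _).trans (min_le_left _ _)))
    have hε1 : ε ≤ 1 := le_of_lt (hεU.trans_le
      ((min_le_right _ _).trans ((min_le_right _ _).trans (min_le_right _ _))))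
    set h : ℝ := ε ^ (m + N + 1) with hhdef
    have hhpos : 0 < h := pow_pos hε0 _
    have hhε : h ≤ ε := by
      calc h ≤ ε ^ 1 := pow_le_pow_of_le_one hε0.le hε1 (by omega)
        _ = ε := pow_one ε
    have hhr : h ≤ r := hhε.trans hεr.le
    have hball : Metric.closedBall x r ⊆ Metric.cthickening r K :=
      Metric.closedBall_subset_cthickening hx r
    have hballh : Metric.closedBall x h ⊆ Metric.closedBall x r :=
      Metric.closedBall_subset_closedBall hhr
    have hsm := hsmooth ε ⟨hε0, hε1⟩
    have hdiffn : ∀ y ∈ Metric.closedBall x h,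
        DifferentiableAt ℝ (iteratedFDeriv ℝ n (u ε)) y :=
      fun y hy => diffAt_iter hΩ hsm n (hrΩ (hball (hballh hy)))
    have hM₀ : ∀ y ∈ Metric.closedBall x h,
        ‖iteratedFDeriv ℝ n (u ε) y‖ ≤ C₀ * ε ^ ((2*m+N+2 : ℕ):ℝ) :=
      fun y hy => hIH ε ⟨hε0, hεε₁⟩ y (hball (hballh hy))
    have hdiffn1 : ∀ z ∈ Metric.closedBall x r,
        DifferentiableAt ℝ (iteratedFDeriv ℝ (n+1) (u ε)) z :=
      fun z hz => diffAt_iter hΩ hsm (n+1) (hrΩ (hball hz))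
    have hbound : ∀ z ∈ Metric.closedBall x r,
        ‖fderiv ℝ (iteratedFDeriv ℝ (n+1) (u ε)) z‖ ≤ C₂ * ε ^ (-(N:ℝ)) := by
      intro z hz
      rw [norm_fderiv_iter]
      exact hmod ε ⟨hε0, hεε₂⟩ z (hball hz)
    have hlip : ∀ y ∈ Metric.closedBall x h,
        ‖fderiv ℝ (iteratedFDeriv ℝ n (u ε)) y - fderiv ℝ (iteratedFDeriv ℝ n (u ε)) x‖
          ≤ (C₂ * ε ^ (-(N:ℝ))) * h := by
      intro y hy
      have hxr : x ∈ Metric.closedBall x r := Metric.mem_closedBall_self (hhpos.le.trans hhr)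
      have hmvt := (convex_closedBall x r).norm_image_sub_le_of_norm_fderiv_le
        hdiffn1 hbound hxr (hballh hy)
      have hnorm : ‖fderiv ℝ (iteratedFDeriv ℝ n (u ε)) y
            - fderiv ℝ (iteratedFDeriv ℝ n (u ε)) x‖
          = ‖iteratedFDeriv ℝ (n+1) (u ε) y - iteratedFDeriv ℝ (n+1) (u ε) x‖ := by
        rw [show fderiv ℝ (iteratedFDeriv ℝ n (u ε)) y
            = (continuousMultilinearCurryLeftEquiv ℝ (fun _ : Fin (n+1) => (Fin s → ℝ)) ℂ)
              (iteratedFDeriv ℝ (n+1) (u ε) y) from congrFun fderiv_iteratedFDeriv y,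
          show fderiv ℝ (iteratedFDeriv ℝ n (u ε)) x
            = (continuousMultilinearCurryLeftEquiv ℝ (fun _ : Fin (n+1) => (Fin s → ℝ)) ℂ)
              (iteratedFDeriv ℝ (n+1) (u ε) x) from congrFun fderiv_iteratedFDeriv x,
          ← LinearIsometryEquiv.map_sub, LinearIsometryEquiv.norm_map]
      rw [hnorm]
      refine hmvt.trans ?_
      have hyx : ‖y - x‖ ≤ h := by
        rw [← dist_eq_norm]; exact Metric.mem_closedBall.mp hy
      gcongr
    have hcore := core_est (iteratedFDeriv ℝ n (u ε)) x h
      (C₀ * ε ^ ((2*m+N+2 : ℕ):ℝ)) ((C₂ * ε ^ (-(N:ℝ))) * h) hhpos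
      (by positivity) hdiffn hM₀ hlip
    rw [show ‖iteratedFDeriv ℝ (n+1) (u ε) x‖
      = ‖fderiv ℝ (iteratedFDeriv ℝ n (u ε)) x‖ from (norm_fderiv_iter n x).symm]
    refine hcore.trans ?_
    have hrpow : h = ε ^ ((m+N+1 : ℕ):ℝ) := by
      rw [Real.rpow_natCast]
    have e1 : 2 * (C₀ * ε ^ ((2*m+N+2 : ℕ):ℝ)) / h = 2 * C₀ * ε ^ ((m:ℝ)+1) := by
      rw [hrpow, show 2 * (C₀ * ε ^ ((2*m+N+2 : ℕ):ℝ)) / ε ^ ((m+N+1 : ℕ):ℝ)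
          = 2 * C₀ * (ε ^ ((2*m+N+2 : ℕ):ℝ) / ε ^ ((m+N+1 : ℕ):ℝ)) from by ring,
        ← Real.rpow_sub hε0,
        show ((2*m+N+2 : ℕ):ℝ) - ((m+N+1 : ℕ):ℝ) = (m:ℝ)+1 from by push_cast; ring]
    have e2 : (C₂ * ε ^ (-(N:ℝ))) * h = C₂ * ε ^ ((m:ℝ)+1) := by
      rw [hrpow, mul_assoc, ← Real.rpow_add hε0,
        show -(N:ℝ) + ((m+N+1 : ℕ):ℝ) = (m:ℝ)+1 from by push_cast; ring]
    rw [e1, e2]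
    have e3 : ε ^ ((m:ℝ)+1) ≤ ε ^ ((m:ℕ):ℝ) :=
      Real.rpow_le_rpow_of_exponent_ge hε0 hε1 (by linarith)
    calc 2 * C₀ * ε ^ ((m:ℝ)+1) + C₂ * ε ^ ((m:ℝ)+1)
        = (2*C₀ + C₂) * ε ^ ((m:ℝ)+1) := by ring
      _ ≤ (2*C₀ + C₂) * ε ^ ((m:ℕ):ℝ) := by gcongr
end

section
/- Simplified negligibility test for the classical full Colombeau algebra: Let Ω ⊆ ℝ^s be open and let R : C_c^∞(ℝ^s,ℝ) × Ω → ℂ be such that for every φ ∈ C_c^∞(ℝ^s,ℝ) the map x ↦ R(φ,x) is smooth on Ω. Assume R is moderate: for every compact K ⊆ Ω and every order n ∈ ℕ there exists N ∈ ℕ such that for every φ ∈ A_N(ℝ^s), sup_{x∈K} ‖iteratedFDeriv n (R(S_ε φ, ·)) (x)‖ = O(ε^{-N}) as ε → 0⁺. If for every compact K ⊆ Ω and every m ∈ ℕ there exists q ∈ ℕ such that for every φ ∈ A_q(ℝ^s), sup_{x∈K} |R(S_ε φ, x)| = O(ε^m) as ε → 0⁺, then for every compact K ⊆ Ω, every order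 n ∈ ℕ and every m ∈ ℕ there exists q ∈ ℕ such that for every φ ∈ A_q(ℝ^s), sup_{x∈K} ‖iteratedFDeriv n (R(S_ε φ, ·)) (x)‖ = O(ε^m) as ε → 0⁺. -/
open Set MeasureTheory Metric

variable {E F : Type*} [NormedAddCommGroup E] [NormedSpace ℝ E]
  [NormedAddCommGroup F] [NormedSpace ℝ F]

/-- Differentiability of iterated derivatives of a function smooth on an open set. -/
lemma aux_diffAt_iteratedFDeriv {g : E → F} {U : Set E} (hU : IsOpen U)
    (hg : ContDiffOn ℝ (⊤ : ℕ∞) g U) (k : ℕ) {x : E} (hx : x ∈ U) :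
    DifferentiableAt ℝ (iteratedFDeriv ℝ k g) x := by
  have h1 : DifferentiableWithinAt ℝ (iteratedFDerivWithin ℝ k g U) U x :=
    hg.differentiableOn_iteratedFDerivWithin (by exact_mod_cast (WithTop.coe_lt_top k : (k:ℕ∞) < ⊤))
      hU.uniqueDiffOn x hx
  have h2 : DifferentiableAt ℝ (iteratedFDerivWithin ℝ k g U) x :=
    h1.differentiableAt (hU.mem_nhds hx)
  exact h2.congr_of_eventuallyEq
    (Filter.eventuallyEq_of_mem (hU.mem_nhds hx) fun z hz =>
      (iteratedFDerivWithin_of_isOpen k hU hz).symm)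

/-- Difference-quotient bound on the first derivative via sup of the function and of the
second derivative on a closed ball. -/
lemma aux_key_ineq {f : E → F} {x : E} {h A M : ℝ} (hh : 0 < h)
    (hdiff : ∀ z ∈ closedBall x h, DifferentiableAt ℝ f z)
    (hdiff2 : ∀ z ∈ closedBall x h, DifferentiableAt ℝ (fderiv ℝ f) z)
    (hA : ∀ z ∈ closedBall x h, ‖f z‖ ≤ A)
    (hM : ∀ z ∈ closedBall x h, ‖fderiv ℝ (fderiv ℝ f) z‖ ≤ M) (hM0 : 0 ≤ M) :
    ‖fderiv ℝ f x‖ ≤ 2 * A / h + M * h := by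
  have hxmem : x ∈ closedBall x h := mem_closedBall_self hh.le
  have hA0 : 0 ≤ A := (norm_nonneg _).trans (hA x hxmem)
  have hconv : Convex ℝ (closedBall x h) := convex_closedBall x h
  -- Lipschitz bound for the derivative
  have step1 : ∀ z ∈ closedBall x h, ‖fderiv ℝ f z - fderiv ℝ f x‖ ≤ M * h := by
    intro z hz
    have := hconv.norm_image_sub_le_of_norm_fderiv_le hdiff2 hM hxmem hz
    refine this.trans (mul_le_mul_of_nonneg_left ?_ hM0)
    simpa [dist_eq_norm] using hz
  have step2 : ∀ y ∈ closedBall x h,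
      ‖f y - f x - fderiv ℝ f x (y - x)‖ ≤ M * h * ‖y - x‖ := by
    intro y hy
    exact hconv.norm_image_sub_le_of_norm_hasFDerivWithin_le'
      (fun z hz => ((hdiff z hz).hasFDerivAt).hasFDerivWithinAt) step1 hxmem hy
  refine ContinuousLinearMap.opNorm_le_bound _ (by positivity) fun v => ?_
  rcases eq_or_ne v 0 with rfl | hv
  · simp
  · have hnv : (0:ℝ) < ‖v‖ := norm_pos_iff.mpr hv
    set u : E := ‖v‖⁻¹ • v with hu
    have hnu : ‖u‖ = 1 := by
      rw [hu, norm_smul, norm_inv, norm_norm, inv_mul_cancel₀ hnv.ne']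
    set y : E := x + h • u with hy
    have hymem : y ∈ closedBall x h := by
      simp [hy, dist_eq_norm, norm_smul, hnu, abs_of_pos hh, hh.le]
    have hyx : y - x = h • u := by simp [hy]
    have key : ‖fderiv ℝ f x (h • u)‖ ≤ 2 * A + M * h * h := by
      have h2 := step2 y hymem
      rw [hyx] at h2
      have : ‖fderiv ℝ f x (h • u)‖ ≤ ‖f y - f x‖ + ‖f y - f x - fderiv ℝ f x (h • u)‖ := by
        have := norm_sub_le (f y - f x) (f y - f x - fderiv ℝ f x (h • u))
        simpa using this
      refine this.trans ?_
      have hfy : ‖f y - f x‖ ≤ 2 * A := by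
        calc ‖f y - f x‖ ≤ ‖f y‖ + ‖f x‖ := norm_sub_le _ _
        _ ≤ A + A := add_le_add (hA y hymem) (hA x hxmem)
        _ = 2 * A := by ring
      have h2' : ‖f y - f x - fderiv ℝ f x (h • u)‖ ≤ M * h * h := by
        refine h2.trans ?_
        rw [norm_smul, hnu, Real.norm_eq_abs, abs_of_pos hh]
        simp
      linarith
    have hTu : ‖fderiv ℝ f x u‖ ≤ 2 * A / h + M * h := by
      rw [_root_.map_smul, norm_smul, Real.norm_eq_abs, abs_of_pos hh] at key
      have h1 : ‖fderiv ℝ f x u‖ ≤ (2 * A + M * h * h) / h := (le_div_iff₀' hh).mpr key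
      refine h1.trans_eq ?_
      field_simp
    have hvu : fderiv ℝ f x v = ‖v‖ • fderiv ℝ f x u := by
      rw [hu, _root_.map_smul, smul_smul, mul_inv_cancel₀ hnv.ne', one_smul]
    rw [hvu, norm_smul, norm_norm]
    nlinarith [norm_nonneg v, norm_nonneg (fderiv ℝ f x u)]

/-- The scaling operator `S_ε`: `(S_ε φ)(ξ) = ε^{-s} φ(ξ/ε)`. -/
noncomputable def scaleTest {s : ℕ} (ε : ℝ) (φ : (Fin s → ℝ) → ℝ) : (Fin s → ℝ) → ℝ :=
  fun ξ => (ε ^ s)⁻¹ * φ (ε⁻¹ • ξ)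

/-- Membership in `A_q(ℝ^s)`: a smooth compactly supported function with integral `1`
whose moments of orders `1 ≤ |α| ≤ q` vanish. -/
def MemA {s : ℕ} (q : ℕ) (φ : (Fin s → ℝ) → ℝ) : Prop :=
  ContDiff ℝ (⊤ : ℕ∞) φ ∧ HasCompactSupport φ ∧ (∫ ξ, φ ξ) = 1 ∧
  ∀ α : Fin s → ℕ, 1 ≤ ∑ i, α i → (∑ i, α i) ≤ q →
    (∫ ξ, (∏ i, ξ i ^ α i) * φ ξ) = 0

lemma memA_mono {s q q' : ℕ} {φ : (Fin s → ℝ) → ℝ} (hqq : q' ≤ q) (hφ : MemA q φ) :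
    MemA q' φ :=
  ⟨hφ.1, hφ.2.1, hφ.2.2.1, fun α h1 h2 => hφ.2.2.2 α h1 (h2.trans hqq)⟩

lemma scaleTest_contDiff {s : ℕ} (ε : ℝ) {φ : (Fin s → ℝ) → ℝ}
    (hφ : ContDiff ℝ (⊤ : ℕ∞) φ) : ContDiff ℝ (⊤ : ℕ∞) (scaleTest ε φ) :=
  contDiff_const.mul (hφ.comp (contDiff_const_smul ε⁻¹))

lemma scaleTest_hcs {s : ℕ} {ε : ℝ} (hε : ε ≠ 0) {φ : (Fin s → ℝ) → ℝ}
    (hφ : HasCompactSupport φ) : HasCompactSupport (scaleTest ε φ) := by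
  have heq : scaleTest ε φ =
      ((fun _ => (ε ^ s)⁻¹) * φ) ∘ ⇑(Homeomorph.smulOfNeZero ε⁻¹ (inv_ne_zero hε)) := rfl
  rw [heq]
  exact (hφ.mul_left).comp_homeomorph _


set_option maxHeartbeats 2000000 in
/-- **Simplified negligibility test for the classical full Colombeau algebra.**
For a moderate `R`, zeroth-order negligibility estimates (on each compact set, for each
order `m`, with test functions from a suitable `A_q`) imply the negligibility estimates
for all derivatives. -/
theorem simplified_negligibility_full_algebra {s : ℕ}
    (Ω : Set (Fin s → ℝ)) (hΩ : IsOpen Ω)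
    (R : ((Fin s → ℝ) → ℝ) → (Fin s → ℝ) → ℂ)
    (hsmooth : ∀ φ : (Fin s → ℝ) → ℝ, ContDiff ℝ (⊤ : ℕ∞) φ → HasCompactSupport φ →
      ContDiffOn ℝ (⊤ : ℕ∞) (R φ) Ω)
    (hmoderate : ∀ K : Set (Fin s → ℝ), K ⊆ Ω → IsCompact K → ∀ n : ℕ, ∃ N : ℕ,
      ∀ φ : (Fin s → ℝ) → ℝ, MemA N φ →
        ∃ C > (0:ℝ), ∃ ε₀ ∈ Ioc (0:ℝ) 1, ∀ ε ∈ Ioo (0:ℝ) ε₀, ∀ x ∈ K,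
          ‖iteratedFDeriv ℝ n (R (scaleTest ε φ)) x‖ ≤ C * ε ^ (-(N:ℝ)))
    (hzero : ∀ K : Set (Fin s → ℝ), K ⊆ Ω → IsCompact K → ∀ m : ℕ, ∃ q : ℕ,
      ∀ φ : (Fin s → ℝ) → ℝ, MemA q φ →
        ∃ C > (0:ℝ), ∃ ε₀ ∈ Ioc (0:ℝ) 1, ∀ ε ∈ Ioo (0:ℝ) ε₀, ∀ x ∈ K,
          ‖R (scaleTest ε φ) x‖ ≤ C * ε ^ (m:ℝ)) :
    ∀ K : Set (Fin s → ℝ), K ⊆ Ω → IsCompact K → ∀ n : ℕ, ∀ m : ℕ, ∃ q : ℕ,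
      ∀ φ : (Fin s → ℝ) → ℝ, MemA q φ →
        ∃ C > (0:ℝ), ∃ ε₀ ∈ Ioc (0:ℝ) 1, ∀ ε ∈ Ioo (0:ℝ) ε₀, ∀ x ∈ K,
          ‖iteratedFDeriv ℝ n (R (scaleTest ε φ)) x‖ ≤ C * ε ^ (m:ℝ) := by
  have main : ∀ n : ℕ, ∀ K : Set (Fin s → ℝ), K ⊆ Ω → IsCompact K → ∀ m : ℕ, ∃ q : ℕ,
      ∀ φ : (Fin s → ℝ) → ℝ, MemA q φ →
        ∃ C > (0:ℝ), ∃ ε₀ ∈ Ioc (0:ℝ) 1, ∀ ε ∈ Ioo (0:ℝ) ε₀, ∀ x ∈ K,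
          ‖iteratedFDeriv ℝ n (R (scaleTest ε φ)) x‖ ≤ C * ε ^ (m:ℝ) := by
    intro n
    induction n with
    | zero =>
      intro K hKΩ hK m
      obtain ⟨q, hq⟩ := hzero K hKΩ hK m
      refine ⟨q, fun φ hφ => ?_⟩
      obtain ⟨C, hC, ε₀, hε₀, H⟩ := hq φ hφ
      refine ⟨C, hC, ε₀, hε₀, fun ε hε x hx => ?_⟩
      rw [norm_iteratedFDeriv_zero]
      exact H ε hε x hx
    | succ n IH =>
      intro K hKΩ hK m
      letI : NormedAddCommGroup ((Fin s → ℝ) →L[ℝ]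
          ContinuousMultilinearMap ℝ (fun _ : Fin n => (Fin s → ℝ)) ℂ) := inferInstance
      letI : NormedSpace ℝ ((Fin s → ℝ) →L[ℝ]
          ContinuousMultilinearMap ℝ (fun _ : Fin n => (Fin s → ℝ)) ℂ) := inferInstance
      obtain ⟨δ, hδpos, hδ⟩ := hK.exists_cthickening_subset_open hΩ hKΩ
      have hK'c : IsCompact (Metric.cthickening δ K) := hK.cthickening
      obtain ⟨N, hN⟩ := hmoderate _ hδ hK'c (n + 2)
      obtain ⟨q₁, hq₁⟩ := IH _ hδ hK'c (N + 2 * m)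
      refine ⟨max q₁ N, fun φ hφ => ?_⟩
      obtain ⟨C₁, hC₁, ε₁, hε₁, H₁⟩ := hq₁ φ (memA_mono (le_max_left _ _) hφ)
      obtain ⟨C₂, hC₂, ε₂, hε₂, H₂⟩ := hN φ (memA_mono (le_max_right _ _) hφ)
      refine ⟨2 * C₁ / δ + C₂ * δ, by positivity, min ε₁ ε₂,
        ⟨lt_min hε₁.1 hε₂.1, (min_le_left _ _).trans hε₁.2⟩, ?_⟩
      intro ε hε x hx
      have hε0 : 0 < ε := hε.1
      have hε1 : ε ≤ 1 := le_of_lt (lt_of_lt_of_le hε.2 ((min_le_left _ _).trans hε₁.2))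
      have hεm₁ : ε ∈ Ioo (0:ℝ) ε₁ := ⟨hε0, hε.2.trans_le (min_le_left _ _)⟩
      have hεm₂ : ε ∈ Ioo (0:ℝ) ε₂ := ⟨hε0, hε.2.trans_le (min_le_right _ _)⟩
      set g := R (scaleTest ε φ) with hgdef
      have hgsm : ContDiffOn ℝ (⊤ : ℕ∞) g Ω :=
        hsmooth _ (scaleTest_contDiff ε hφ.1) (scaleTest_hcs hε0.ne' hφ.2.1)
      set h : ℝ := δ * ε ^ (N + m) with hhdef
      have hhpos : 0 < h := by positivity
      have hballK' : closedBall x h ⊆ Metric.cthickening δ K := by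
        refine subset_trans (closedBall_subset_closedBall ?_)
          (closedBall_subset_cthickening hx δ)
        calc h = δ * ε ^ (N + m) := rfl
          _ ≤ δ * 1 := by
            exact mul_le_mul_of_nonneg_left (pow_le_one₀ hε0.le hε1) hδpos.le
          _ = δ := mul_one δ
      have hball : closedBall x h ⊆ Ω := hballK'.trans hδ
      have diff1 : ∀ z ∈ closedBall x h, DifferentiableAt ℝ (iteratedFDeriv ℝ n g) z :=
        fun z hz => aux_diffAt_iteratedFDeriv hΩ hgsm n (hball hz)
      have diff2 : ∀ z ∈ closedBall x h,
          DifferentiableAt ℝ (fderiv ℝ (iteratedFDeriv ℝ n g)) z := by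
        intro z hz
        rw [fderiv_iteratedFDeriv, LinearIsometryEquiv.comp_differentiableAt_iff]
        exact aux_diffAt_iteratedFDeriv hΩ hgsm (n + 1) (hball hz)
      have boundA : ∀ z ∈ closedBall x h,
          ‖iteratedFDeriv ℝ n g z‖ ≤ C₁ * ε ^ (((N + 2 * m : ℕ)):ℝ) :=
        fun z hz => H₁ ε hεm₁ z (hballK' hz)
      have boundM : ∀ z ∈ closedBall x h,
          ‖fderiv ℝ (fderiv ℝ (iteratedFDeriv ℝ n g)) z‖ ≤ C₂ * ε ^ (-(N:ℝ)) := by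
        intro z hz
        have hnorm : ‖fderiv ℝ (fderiv ℝ (iteratedFDeriv ℝ n g)) z‖ =
            ‖iteratedFDeriv ℝ (n + 2) g z‖ := by
          conv_lhs => rw [fderiv_iteratedFDeriv]
          rw [LinearIsometryEquiv.comp_fderiv]
          rw [show ((continuousMultilinearCurryLeftEquiv ℝ
              (fun _ : Fin (n + 1) => (Fin s → ℝ)) ℂ) :
              _ →L[ℝ] _) = (continuousMultilinearCurryLeftEquiv ℝ
              (fun _ : Fin (n + 1) => (Fin s → ℝ)) ℂ).toLinearIsometry.toContinuousLinearMap
            from rfl]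
          rw [LinearIsometry.norm_toContinuousLinearMap_comp]
          exact norm_fderiv_iteratedFDeriv
        rw [hnorm]
        exact H₂ ε hεm₂ z (hballK' hz)
      have key := aux_key_ineq hhpos diff1 diff2 boundA boundM (by positivity)
      rw [← norm_fderiv_iteratedFDeriv]
      refine key.trans ?_
      have harith : 2 * (C₁ * ε ^ (((N + 2 * m : ℕ)):ℝ)) / h + C₂ * ε ^ (-(N:ℝ)) * h =
          (2 * C₁ / δ + C₂ * δ) * ε ^ (m:ℝ) := by
        rw [hhdef, Real.rpow_natCast, Real.rpow_natCast,
          Real.rpow_neg hε0.le, Real.rpow_natCast]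
        have hεne : ε ≠ 0 := hε0.ne'
        have hδne : δ ≠ 0 := hδpos.ne'
        field_simp
        ring
      rw [harith]
  intro K hKΩ hK n m
  exact main n K hKΩ hK m
end

section
/- Let Ω ⊆ ℝ^s be open, let c : (0,1] × Ω → ℝ be such that for each ε the map x ↦ c(ε,x) has first and second partial derivatives in the i-th coordinate direction (for some fixed i ∈ {1,…,s}). Let q > 0 and 0 ≤ r < 1 be real numbers, and let K, L be compact sets with K ⊆ interior(L) and L ⊆ Ω. If sup_{x∈L} |c(ε,x)| = O(ε^q) and sup_{x∈L} |∂_i² c(ε,x)| = O(ε^{rq}) as ε → 0⁺, then sup_{x∈K} |∂_i c(ε,x)| = O(ε^{(1+r)q/2}) as ε → 0⁺. -/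
open Set

/-- **Landau-type interpolation lemma (Lemma on `∂_i c`).**
If `c(ε,·)` has first and second partial derivatives `c1`, `c2` in the `i`-th coordinate
direction on the open set `Ω`, `sup_L |c(ε,·)| = O(ε^q)` and `sup_L |∂_i²c(ε,·)| = O(ε^{rq})`
with `q > 0`, `0 ≤ r < 1`, and `K ⊆ interior L`, `L ⊆ Ω` compact, then
`sup_K |∂_i c(ε,·)| = O(ε^{(1+r)q/2})`. -/
theorem landau_interpolation {s : ℕ}
    (Ω : Set (Fin s → ℝ)) (hΩ : IsOpen Ω) (i : Fin s)
    (c c1 c2 : ℝ → (Fin s → ℝ) → ℝ)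
    (hd1 : ∀ ε ∈ Ioc (0:ℝ) 1, ∀ x ∈ Ω,
      HasDerivAt (fun t => c ε (Function.update x i t)) (c1 ε x) (x i))
    (hd2 : ∀ ε ∈ Ioc (0:ℝ) 1, ∀ x ∈ Ω,
      HasDerivAt (fun t => c1 ε (Function.update x i t)) (c2 ε x) (x i))
    (q r : ℝ) (hq : 0 < q) (hr0 : 0 ≤ r) (hr1 : r < 1)
    (K L : Set (Fin s → ℝ)) (hK : IsCompact K) (hL : IsCompact L)
    (hKL : K ⊆ interior L) (hLΩ : L ⊆ Ω)
    (h0 : ∃ C > (0:ℝ), ∃ ε₀ ∈ Ioc (0:ℝ) 1, ∀ ε ∈ Ioo (0:ℝ) ε₀, ∀ x ∈ L,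
      |c ε x| ≤ C * ε ^ q)
    (h2 : ∃ C > (0:ℝ), ∃ ε₀ ∈ Ioc (0:ℝ) 1, ∀ ε ∈ Ioo (0:ℝ) ε₀, ∀ x ∈ L,
      |c2 ε x| ≤ C * ε ^ (r * q)) :
    ∃ C > (0:ℝ), ∃ ε₀ ∈ Ioc (0:ℝ) 1, ∀ ε ∈ Ioo (0:ℝ) ε₀, ∀ x ∈ K,
      |c1 ε x| ≤ C * ε ^ ((1 + r) * q / 2) := by
  obtain ⟨C0, hC0, ε1, hε1, hb0⟩ := h0
  obtain ⟨C2, hC2, ε2, hε2, hb2⟩ := h2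
  obtain ⟨δ, hδ, hth⟩ := hK.exists_cthickening_subset_open isOpen_interior hKL
  refine ⟨2*C0/δ + δ*C2, by positivity, min ε1 ε2,
    ⟨lt_min hε1.1 hε2.1, le_trans (min_le_left _ _) hε1.2⟩, ?_⟩
  intro ε hε x hx
  have hε0 : 0 < ε := hε.1
  have hεm1 : ε < ε1 := lt_of_lt_of_le hε.2 (min_le_left _ _)
  have hεm2 : ε < ε2 := lt_of_lt_of_le hε.2 (min_le_right _ _)
  have hεle1 : ε ≤ 1 := le_of_lt (lt_of_lt_of_le hεm1 hε1.2)
  have h1r : 0 < 1 - r := by linarith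
  set p : ℝ := (1-r)*q/2 with hp
  have hppos : 0 < p := by positivity
  set h : ℝ := δ * ε ^ p with hhdef
  have hP : 0 < ε ^ p := Real.rpow_pos_of_pos hε0 p
  have hh : 0 < h := by positivity
  have hPle1 : ε ^ p ≤ 1 := Real.rpow_le_one hε0.le hεle1 hppos.le
  have hhδ : h ≤ δ := by
    calc h = δ * ε ^ p := rfl
    _ ≤ δ * 1 := by nlinarith
    _ = δ := mul_one δ
  set a : ℝ := x i with ha
  have hmem : ∀ t ∈ Icc a (a+h), Function.update x i t ∈ L := by
    intro t ht
    have hd : dist (Function.update x i t) x ≤ δ := by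
      rw [dist_pi_le_iff hδ.le]
      intro b
      rcases eq_or_ne b i with rfl | hb
      · simp only [Function.update_self, Real.dist_eq]
        rw [abs_le]
        constructor <;> [linarith [ht.1]; linarith [ht.2]]
      · simp [Function.update_of_ne hb, hδ.le]
    exact interior_subset (hth (Metric.mem_cthickening_of_dist_le _ x δ K hx hd))
  have hmemΩ : ∀ t ∈ Icc a (a+h), Function.update x i t ∈ Ω :=
    fun t ht => hLΩ (hmem t ht)
  have key1 : ∀ t, Function.update x i t ∈ Ω →
      HasDerivAt (fun u => c ε (Function.update x i u))
        (c1 ε (Function.update x i t)) t := by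
    intro t ht
    have := hd1 ε ⟨hε0, hεle1⟩ _ ht
    simpa [Function.update_idem, Function.update_self] using this
  have key2 : ∀ t, Function.update x i t ∈ Ω →
      HasDerivAt (fun u => c1 ε (Function.update x i u))
        (c2 ε (Function.update x i t)) t := by
    intro t ht
    have := hd2 ε ⟨hε0, hεle1⟩ _ ht
    simpa [Function.update_idem, Function.update_self] using this
  have hlt : a < a + h := by linarith
  have cont_g : ContinuousOn (fun u => c ε (Function.update x i u)) (Icc a (a+h)) :=
    fun t ht => ((key1 t (hmemΩ t ht)).continuousAt).continuousWithinAt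
  obtain ⟨ξ, hξ, hξ'⟩ := exists_hasDerivAt_eq_slope
    (fun u => c ε (Function.update x i u))
    (fun u => c1 ε (Function.update x i u)) hlt cont_g
    (fun t ht => key1 t (hmemΩ t (Ioo_subset_Icc_self ht)))
  have hIccsub : Icc a ξ ⊆ Icc a (a+h) := Icc_subset_Icc le_rfl hξ.2.le
  have cont_g1 : ContinuousOn (fun u => c1 ε (Function.update x i u)) (Icc a ξ) :=
    fun t ht => ((key2 t (hmemΩ t (hIccsub ht))).continuousAt).continuousWithinAt
  obtain ⟨η, hη, hη'⟩ := exists_hasDerivAt_eq_slope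
    (fun u => c1 ε (Function.update x i u))
    (fun u => c2 ε (Function.update x i u)) hξ.1 cont_g1
    (fun t ht => key2 t (hmemΩ t (hIccsub (Ioo_subset_Icc_self ht))))
  have hξa : (0:ℝ) < ξ - a := by linarith [hξ.1]
  have hxa : Function.update x i a = x := Function.update_eq_self i x
  -- memberships for the bounds
  have hxL : x ∈ L := interior_subset (hKL hx)
  have hmb : Function.update x i (a+h) ∈ L :=
    hmem _ ⟨by linarith, le_rfl⟩
  have hmη : Function.update x i η ∈ L :=
    hmem _ (hIccsub (Ioo_subset_Icc_self hη))
  -- bounds from hypotheses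
  have B0a : |c ε x| ≤ C0 * ε ^ q := hb0 ε ⟨hε0, hεm1⟩ x hxL
  have B0b : |c ε (Function.update x i (a+h))| ≤ C0 * ε ^ q := hb0 ε ⟨hε0, hεm1⟩ _ hmb
  have B2 : |c2 ε (Function.update x i η)| ≤ C2 * ε ^ (r*q) := hb2 ε ⟨hε0, hεm2⟩ _ hmη
  -- rewrite slopes
  have hslope1 : c1 ε (Function.update x i ξ)
      = (c ε (Function.update x i (a+h)) - c ε x) / h := by
    rw [hξ']; rw [hxa]; ring_nf
  have hslope2 : c1 ε x = c1 ε (Function.update x i ξ)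
      - (ξ - a) * c2 ε (Function.update x i η) := by
    rw [hη', hxa]
    field_simp
    ring
  -- exponent arithmetic
  have e1 : ε ^ q = ε ^ ((1+r)*q/2) * ε ^ p := by
    rw [← Real.rpow_add hε0]; congr 1; rw [hp]; ring
  have e2 : ε ^ p * ε ^ (r*q) = ε ^ ((1+r)*q/2) := by
    rw [← Real.rpow_add hε0]; congr 1; rw [hp]; ring
  have hE : 0 < ε ^ ((1+r)*q/2) := Real.rpow_pos_of_pos hε0 _
  -- assemble
  have bnd1 : |c1 ε (Function.update x i ξ)| ≤ (2*C0/δ) * ε ^ ((1+r)*q/2) := by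
    rw [hslope1, abs_div, abs_of_pos hh, div_le_iff₀ hh]
    calc |c ε (Function.update x i (a+h)) - c ε x|
        ≤ |c ε (Function.update x i (a+h))| + |c ε x| := abs_sub _ _
      _ ≤ 2 * (C0 * ε ^ q) := by linarith
      _ = 2*C0/δ * ε ^ ((1+r)*q/2) * h := by
          rw [e1, hhdef]; field_simp
  have hξah : ξ - a ≤ h := by linarith [hξ.2]
  have bnd2 : (ξ - a) * |c2 ε (Function.update x i η)| ≤ δ*C2 * ε ^ ((1+r)*q/2) := by
    calc (ξ - a) * |c2 ε (Function.update x i η)|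
        ≤ h * (C2 * ε ^ (r*q)) := by
          apply mul_le_mul hξah B2 (abs_nonneg _) hh.le
      _ = δ*C2 * ε ^ ((1+r)*q/2) := by rw [hhdef, ← e2]; ring
  calc |c1 ε x| = |c1 ε (Function.update x i ξ)
        - (ξ - a) * c2 ε (Function.update x i η)| := by rw [hslope2]
    _ ≤ |c1 ε (Function.update x i ξ)| + |(ξ - a) * c2 ε (Function.update x i η)| :=
        abs_sub _ _
    _ = |c1 ε (Function.update x i ξ)| + (ξ - a) * |c2 ε (Function.update x i η)| := by
        rw [abs_mul, abs_of_pos hξa]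
    _ ≤ (2*C0/δ) * ε ^ ((1+r)*q/2) + δ*C2 * ε ^ ((1+r)*q/2) := by linarith
    _ = (2*C0/δ + δ*C2) * ε ^ ((1+r)*q/2) := by ring
end

section
/- Landau-type derivative estimate with negative-order second derivative (key step in the simplified negligibility criterion): Let Ω ⊆ ℝ^s be open, let K, L be compact sets with K ⊆ interior(L) and L ⊆ Ω, fix i ∈ {1,…,s} and n, N ∈ ℕ. Let c : (0,1] × Ω → ℝ be such that for each ε the map x ↦ c(ε,x) has first and second partial derivatives in the i-th coordinate direction. If sup_{x∈L} |c(ε,x)| = O(ε^{2n+N}) and sup_{x∈L} |∂_i² c(ε,x)| = O(ε^{-N}) as ε → 0⁺, then sup_{x∈K} |∂_i c(ε,x)| = O(ε^{n}) as ε → 0⁺. -/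
open Set

/-- **Landau-type derivative estimate with negative-order second derivative.**
If `sup_L |c(ε,·)| = O(ε^{2n+N})` and `sup_L |∂_i²c(ε,·)| = O(ε^{-N})`, where `c1`, `c2`
are the first and second partial derivatives of `c(ε,·)` in the `i`-th coordinate
direction on `Ω`, and `K ⊆ interior L`, `L ⊆ Ω` are compact, then
`sup_K |∂_i c(ε,·)| = O(ε^{n})`. -/
theorem landau_negative_order {s : ℕ}
    (Ω : Set (Fin s → ℝ)) (hΩ : IsOpen Ω) (i : Fin s) (n N : ℕ)
    (K L : Set (Fin s → ℝ)) (hK : IsCompact K) (hL : IsCompact L)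
    (hKL : K ⊆ interior L) (hLΩ : L ⊆ Ω)
    (c c1 c2 : ℝ → (Fin s → ℝ) → ℝ)
    (hd1 : ∀ ε ∈ Ioc (0:ℝ) 1, ∀ x ∈ Ω,
      HasDerivAt (fun t => c ε (Function.update x i t)) (c1 ε x) (x i))
    (hd2 : ∀ ε ∈ Ioc (0:ℝ) 1, ∀ x ∈ Ω,
      HasDerivAt (fun t => c1 ε (Function.update x i t)) (c2 ε x) (x i))
    (h0 : ∃ C > (0:ℝ), ∃ ε₀ ∈ Ioc (0:ℝ) 1, ∀ ε ∈ Ioo (0:ℝ) ε₀, ∀ x ∈ L,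
      |c ε x| ≤ C * ε ^ (2 * (n:ℝ) + (N:ℝ)))
    (h2 : ∃ C > (0:ℝ), ∃ ε₀ ∈ Ioc (0:ℝ) 1, ∀ ε ∈ Ioo (0:ℝ) ε₀, ∀ x ∈ L,
      |c2 ε x| ≤ C * ε ^ (-(N:ℝ))) :
    ∃ C > (0:ℝ), ∃ ε₀ ∈ Ioc (0:ℝ) 1, ∀ ε ∈ Ioo (0:ℝ) ε₀, ∀ x ∈ K,
      |c1 ε x| ≤ C * ε ^ (n:ℝ) := by
  obtain ⟨C0, hC0, ε1, hε1, hb0⟩ := h0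
  obtain ⟨C2, hC2, ε2, hε2, hb2⟩ := h2
  -- a positive δ such that moving the i-th coordinate by at most δ stays in L
  obtain ⟨δ, hδpos, hδsub⟩ := hK.exists_cthickening_subset_open isOpen_interior hKL
  have hδL : ∀ x ∈ K, ∀ t : ℝ, |t - x i| ≤ δ → Function.update x i t ∈ L := by
    intro x hx t ht
    have hdist : dist (Function.update x i t) x ≤ δ := by
      rw [dist_pi_le_iff hδpos.le]
      intro j
      by_cases hj : j = i
      · subst hj; simpa [Real.dist_eq] using ht
      · simp [Function.update_of_ne hj]
        exact hδpos.le
    exact interior_subset (hδsub (Metric.mem_cthickening_of_dist_le _ x δ K hx hdist))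
  refine ⟨2 * C0 / δ + C2 * δ, by positivity, min ε1 ε2,
    ⟨lt_min hε1.1 hε2.1, (min_le_left _ _).trans hε1.2⟩, ?_⟩
  intro ε hε x hxK
  have hε0 : 0 < ε := hε.1
  have hε1' : ε < ε1 := hε.2.trans_le (min_le_left _ _)
  have hε2' : ε < ε2 := hε.2.trans_le (min_le_right _ _)
  have hεle1 : ε ≤ 1 := hε1'.le.trans hε1.2
  have hεIoc : ε ∈ Ioc (0:ℝ) 1 := ⟨hε0, hεle1⟩
  set a : ℝ := x i with ha
  set h : ℝ := δ * ε ^ ((n:ℝ) + N) with hh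
  have hrpos : (0:ℝ) < ε ^ ((n:ℝ) + N) := Real.rpow_pos_of_pos hε0 _
  have hhpos : 0 < h := mul_pos hδpos hrpos
  have hhle : h ≤ δ := by
    have : ε ^ ((n:ℝ) + N) ≤ 1 := Real.rpow_le_one hε0.le hεle1 (by positivity)
    calc h ≤ δ * 1 := by
            exact mul_le_mul_of_nonneg_left this hδpos.le
      _ = δ := mul_one δ
  -- points of the segment are in L
  have hmemL : ∀ t ∈ Icc a (a + h), Function.update x i t ∈ L := by
    intro t ht
    apply hδL x hxK
    have h1 : 0 ≤ t - a := by linarith [ht.1]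
    have h2 : t - a ≤ h := by linarith [ht.2]
    rw [abs_of_nonneg h1]; linarith
  have hmemΩ : ∀ t ∈ Icc a (a + h), Function.update x i t ∈ Ω := fun t ht =>
    hLΩ (hmemL t ht)
  -- derivative facts along the segment
  have hg1 : ∀ t ∈ Icc a (a + h),
      HasDerivAt (fun u => c ε (Function.update x i u))
        (c1 ε (Function.update x i t)) t := by
    intro t ht
    have := hd1 ε hεIoc _ (hmemΩ t ht)
    simpa [Function.update_idem] using this
  have hg2 : ∀ t ∈ Icc a (a + h),
      HasDerivAt (fun u => c1 ε (Function.update x i u))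
        (c2 ε (Function.update x i t)) t := by
    intro t ht
    have := hd2 ε hεIoc _ (hmemΩ t ht)
    simpa [Function.update_idem] using this
  set M2 : ℝ := C2 * ε ^ (-(N:ℝ)) with hM2
  have hM2pos : 0 < M2 := mul_pos hC2 (Real.rpow_pos_of_pos hε0 _)
  -- Step A: variation of the first derivative
  have hA : ∀ t ∈ Icc a (a + h),
      |c1 ε (Function.update x i t) - c1 ε (Function.update x i a)| ≤ M2 * (t - a) := by
    have := norm_image_sub_le_of_norm_deriv_le_segment'
      (f := fun u => c1 ε (Function.update x i u))
      (f' := fun t => c2 ε (Function.update x i t)) (a := a) (b := a + h) (C := M2)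
      (fun t ht => (hg2 t ht).hasDerivWithinAt)
      (fun t ht => by
        simpa [Real.norm_eq_abs, hM2] using hb2 ε ⟨hε0, hε2'⟩ _ (hmemL t (Ico_subset_Icc_self ht)))
    intro t ht
    simpa [Real.norm_eq_abs] using this t ht
  -- Step B: Taylor-type bound
  have hB : |c ε (Function.update x i (a + h)) - c ε (Function.update x i a)
      - c1 ε (Function.update x i a) * h| ≤ (M2 * h) * h := by
    have key := norm_image_sub_le_of_norm_deriv_le_segment'
      (f := fun u => c ε (Function.update x i u) - c1 ε (Function.update x i a) * (u - a))
      (f' := fun t => c1 ε (Function.update x i t) - c1 ε (Function.update x i a))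
      (a := a) (b := a + h) (C := M2 * h)
      (fun t ht => by
        have hd := (hg1 t ht).sub
          (((hasDerivAt_id t).sub_const a).const_mul (c1 ε (Function.update x i a)))
        have hd' := hd.hasDerivWithinAt (s := Icc a (a + h))
        rw [mul_one] at hd'
        exact hd')
      (fun t ht => by
        have h1 := hA t (Ico_subset_Icc_self ht)
        have h2 : t - a ≤ h := by linarith [ht.2]
        have h3 : M2 * (t - a) ≤ M2 * h := mul_le_mul_of_nonneg_left h2 hM2pos.le
        simpa [Real.norm_eq_abs] using h1.trans h3)
    have key2 := key (a + h) (right_mem_Icc.2 (by linarith))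
    rw [Real.norm_eq_abs] at key2
    have e : c ε (Function.update x i (a + h)) - c ε (Function.update x i a)
        - c1 ε (Function.update x i a) * h
        = (c ε (Function.update x i (a + h)) - c1 ε (Function.update x i a) * (a + h - a))
          - (c ε (Function.update x i a) - c1 ε (Function.update x i a) * (a - a)) := by ring
    have e2 : (M2 * h) * h = (M2 * h) * (a + h - a) := by ring
    rw [e, e2]
    exact key2
  -- put things together
  have hxa : Function.update x i a = x := Function.update_eq_self i x
  have hxL : x ∈ L := interior_subset (hKL hxK)
  have hb_at : |c ε x| ≤ C0 * ε ^ (2 * (n:ℝ) + N) := hb0 ε ⟨hε0, hε1'⟩ x hxL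
  have hb_ah : |c ε (Function.update x i (a + h))| ≤ C0 * ε ^ (2 * (n:ℝ) + N) :=
    hb0 ε ⟨hε0, hε1'⟩ _ (hmemL (a + h) (right_mem_Icc.2 (by linarith)))
  rw [hxa] at hB
  have hmain : |c1 ε x| * h ≤ 2 * (C0 * ε ^ (2 * (n:ℝ) + N)) + M2 * h ^ 2 := by
    have h1 : |c1 ε x * h| ≤ |c ε (Function.update x i (a + h))| + |c ε x| + (M2 * h) * h := by
      have := abs_sub_abs_le_abs_sub (c1 ε x * h)
        (c1 ε x * h - (c ε (Function.update x i (a + h)) - c ε x - c1 ε x * h) - (c ε x) * 0)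
      calc |c1 ε x * h|
          = |(c ε (Function.update x i (a + h)) - c ε x - c1 ε x * h) * (-1)
              + (c ε (Function.update x i (a + h)) - c ε x)| := by ring_nf
        _ ≤ |(c ε (Function.update x i (a + h)) - c ε x - c1 ε x * h) * (-1)|
              + |c ε (Function.update x i (a + h)) - c ε x| := abs_add_le _ _
        _ ≤ (M2 * h) * h + (|c ε (Function.update x i (a + h))| + |c ε x|) := by
              rw [abs_mul, abs_neg, abs_one, mul_one]
              exact add_le_add hB (abs_sub _ _)
        _ = |c ε (Function.update x i (a + h))| + |c ε x| + (M2 * h) * h := by ring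
    rw [abs_mul, abs_of_pos hhpos] at h1
    nlinarith [hb_at, hb_ah]
  -- now the rpow arithmetic
  have hr1 : ε ^ (2 * (n:ℝ) + N) = ε ^ ((n:ℝ) + N) * ε ^ (n:ℝ) := by
    rw [← Real.rpow_add hε0]; ring_nf
  have hr2 : ε ^ (-(N:ℝ)) * ε ^ ((n:ℝ) + N) = ε ^ (n:ℝ) := by
    rw [← Real.rpow_add hε0]; ring_nf
  have hfinal : |c1 ε x| ≤ (2 * C0 / δ + C2 * δ) * ε ^ (n:ℝ) := by
    rw [← le_div_iff₀ hhpos] at hmain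
    have heq : (2 * (C0 * ε ^ (2 * (n:ℝ) + N)) + M2 * h ^ 2) / h
        = (2 * C0 / δ + C2 * δ) * ε ^ (n:ℝ) := by
      rw [hM2, hh, hr1]
      field_simp
      rw [Real.rpow_natCast] at hr2 ⊢
      linear_combination (C2 * δ ^ 2) * hr2
    rw [heq] at hmain
    exact hmain
  exact hfinal
end

section
/- Let r : ℕ → ℝ be defined by r₁ = 0 and r_{k+1} = (1+r_k)²/4. Let Ω ⊆ ℝ^s be open, fix i ∈ {1,…,s}, let q > 0 be real, and let K, L be compact sets with K ⊆ interior(L) and L ⊆ Ω. Let c : (0,1] × Ω → ℝ be such that for each ε the map x ↦ c(ε,x) has partial derivatives ∂_i^m c of all orders m in the i-th coordinate direction. If sup_{x∈L} |c(ε,x)| = O(ε^q) and sup_{x∈L} |∂_i^m c(ε,x)| = O(1) as ε → 0⁺ for every m ∈ ℕ, then for every k ∈ ℕ, sup_{x∈K} |∂_i c(ε,x)| = O(ε^{(1+r_k)q/2}) as ε → 0⁺. -/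
open Set


lemma landau_core {s : ℕ}
    (Ω : Set (Fin s → ℝ)) (i : Fin s)
    (cm : ℕ → ℝ → (Fin s → ℝ) → ℝ)
    (hd : ∀ m : ℕ, ∀ ε ∈ Ioc (0:ℝ) 1, ∀ x ∈ Ω,
      HasDerivAt (fun t => cm m ε (Function.update x i t)) (cm (m + 1) ε x) (x i))
    (m : ℕ) (K' L' : Set (Fin s → ℝ)) (hK' : IsCompact K')
    (hKL' : K' ⊆ interior L') (hL'Ω : L' ⊆ Ω)
    (a b : ℝ) (hb : 0 ≤ b) (hba : b ≤ a)
    (hA : ∃ C > (0:ℝ), ∃ ε₀ ∈ Ioc (0:ℝ) 1, ∀ ε ∈ Ioo (0:ℝ) ε₀, ∀ x ∈ L',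
      |cm m ε x| ≤ C * ε ^ a)
    (hB : ∃ C > (0:ℝ), ∃ ε₀ ∈ Ioc (0:ℝ) 1, ∀ ε ∈ Ioo (0:ℝ) ε₀, ∀ x ∈ L',
      |cm (m + 2) ε x| ≤ C * ε ^ b) :
    ∃ C > (0:ℝ), ∃ ε₀ ∈ Ioc (0:ℝ) 1, ∀ ε ∈ Ioo (0:ℝ) ε₀, ∀ x ∈ K',
      |cm (m + 1) ε x| ≤ C * ε ^ ((a + b) / 2) := by
  obtain ⟨Ca, hCa, εA, hεA, hA⟩ := hA
  obtain ⟨Cb, hCb, εB, hεB, hB⟩ := hB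
  obtain ⟨δ₀, hδ₀, hthick⟩ := hK'.exists_thickening_subset_open isOpen_interior hKL'
  set δ : ℝ := min δ₀ 1 / 2 with hδdef
  have hδpos : 0 < δ := by positivity
  have hδlt : δ < δ₀ := by
    have h1 : min δ₀ 1 ≤ δ₀ := min_le_left _ _
    have : δ ≤ δ₀ / 2 := by rw [hδdef]; linarith
    linarith
  refine ⟨2 * Ca / δ + Cb * δ, by positivity, min εA εB,
    ⟨lt_min hεA.1 hεB.1, le_trans (min_le_left _ _) hεA.2⟩, ?_⟩
  intro ε hε x hx
  have hεpos : 0 < ε := hε.1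
  have hεA' : ε ∈ Ioo (0:ℝ) εA := ⟨hεpos, lt_of_lt_of_le hε.2 (min_le_left _ _)⟩
  have hεB' : ε ∈ Ioo (0:ℝ) εB := ⟨hεpos, lt_of_lt_of_le hε.2 (min_le_right _ _)⟩
  have hε1 : ε ≤ 1 := le_trans hεA'.2.le hεA.2
  set h : ℝ := δ * ε ^ ((a - b) / 2) with hh
  have hrpos : (0:ℝ) < ε ^ ((a - b) / 2) := Real.rpow_pos_of_pos hεpos _
  have hhpos : 0 < h := by positivity
  have hrle1 : ε ^ ((a - b) / 2) ≤ 1 :=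
    Real.rpow_le_one hεpos.le hε1 (by linarith)
  have hhle : h ≤ δ := by
    calc h ≤ δ * 1 := by rw [hh]; exact mul_le_mul_of_nonneg_left hrle1 hδpos.le
    _ = δ := mul_one _
  -- segment membership
  have hseg : ∀ t' ∈ Icc (x i) (x i + h), Function.update x i t' ∈ L' := by
    intro t' ht'
    have hdist : dist (Function.update x i t') x ≤ δ := by
      rw [dist_pi_le_iff hδpos.le]
      intro j
      by_cases hj : j = i
      · subst hj
        simp only [Function.update_self]
        rw [Real.dist_eq, abs_of_nonneg (by linarith [ht'.1])]
        linarith [ht'.2]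
      · simp only [Function.update_of_ne hj]
        simpa using hδpos.le
    have : Function.update x i t' ∈ Metric.thickening δ₀ K' :=
      Metric.mem_thickening_iff.2 ⟨x, hx, lt_of_le_of_lt hdist hδlt⟩
    exact interior_subset (hthick this)
  -- slice functions and their derivatives
  set g : ℕ → ℝ → ℝ := fun j t' => cm j ε (Function.update x i t') with hg
  have hgd : ∀ j : ℕ, ∀ t' ∈ Icc (x i) (x i + h), HasDerivAt (g j) (g (j + 1) t') t' := by
    intro j t' ht'
    have hmem : Function.update x i t' ∈ Ω := hL'Ω (hseg t' ht')
    have key := hd j ε ⟨hεpos, hε1⟩ _ hmem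
    simp only [Function.update_idem, Function.update_self] at key
    exact key
  have hlt : x i < x i + h := by linarith
  have hcont : ∀ j, ContinuousOn (g j) (Icc (x i) (x i + h)) := fun j t' ht' =>
    (hgd j t' ht').continuousAt.continuousWithinAt
  obtain ⟨ξ, hξ, hξeq⟩ := exists_hasDerivAt_eq_slope (g m) (g (m + 1)) hlt (hcont m)
    (fun t' ht' => hgd m t' (Ioo_subset_Icc_self ht'))
  have hξIcc : Icc (x i) ξ ⊆ Icc (x i) (x i + h) := Icc_subset_Icc_right hξ.2.le
  obtain ⟨η, hη, hηeq⟩ := exists_hasDerivAt_eq_slope (g (m + 1)) (g (m + 2)) hξ.1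
    ((hcont (m + 1)).mono hξIcc)
    (fun t' ht' => hgd (m + 1) t' (hξIcc (Ioo_subset_Icc_self ht')))
  -- rewrite the goal value
  have hxval : cm (m + 1) ε x = g (m + 1) (x i) := by
    rw [hg]; simp [Function.update_eq_self]
  -- bounds
  have hξne : ξ - x i ≠ 0 := by have := hξ.1; intro hc; linarith [sub_eq_zero.1 hc]
  have hexp : g (m + 1) (x i) = g (m + 1) ξ - (ξ - x i) * g (m + 2) η := by
    field_simp at hηeq
    linarith [hηeq]
  have hbA : ∀ t' ∈ Icc (x i) (x i + h), |g m t'| ≤ Ca * ε ^ a := fun t' ht' =>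
    hA ε hεA' _ (hseg t' ht')
  have hbB : ∀ t' ∈ Icc (x i) (x i + h), |g (m + 2) t'| ≤ Cb * ε ^ b := fun t' ht' =>
    hB ε hεB' _ (hseg t' ht')
  have hξbound : |g (m + 1) ξ| ≤ 2 * Ca * ε ^ a / h := by
    rw [hξeq]
    have h1 := hbA (x i + h) ⟨by linarith, le_refl _⟩
    have h2 := hbA (x i) ⟨le_refl _, by linarith⟩
    rw [abs_div]
    rw [show x i + h - x i = h by ring, abs_of_pos hhpos]
    rw [div_le_div_iff₀ hhpos hhpos]
    have : |g m (x i + h) - g m (x i)| ≤ 2 * (Ca * ε ^ a) :=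
      (abs_sub _ _).trans (by linarith)
    nlinarith [abs_nonneg (g m (x i + h) - g m (x i))]
  have hηbound : |g (m + 2) η| ≤ Cb * ε ^ b :=
    hbB η (hξIcc (Ioo_subset_Icc_self hη))
  have hξdist : |ξ - x i| ≤ h := by
    rw [abs_of_pos (by linarith [hξ.1] : (0:ℝ) < ξ - x i)]
    linarith [hξ.2]
  have hmain : |g (m + 1) (x i)| ≤ 2 * Ca * ε ^ a / h + h * (Cb * ε ^ b) := by
    rw [hexp]
    calc |g (m + 1) ξ - (ξ - x i) * g (m + 2) η|
        ≤ |g (m + 1) ξ| + |(ξ - x i) * g (m + 2) η| := abs_sub _ _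
      _ ≤ 2 * Ca * ε ^ a / h + h * (Cb * ε ^ b) := by
          rw [abs_mul]
          have := mul_le_mul hξdist hηbound (abs_nonneg _) hhpos.le
          linarith [hξbound]
  -- exponent arithmetic
  have hsplit1 : ε ^ a = ε ^ ((a + b) / 2) * ε ^ ((a - b) / 2) := by
    rw [← Real.rpow_add hεpos]; ring_nf
  have hsplit2 : ε ^ b * ε ^ ((a - b) / 2) = ε ^ ((a + b) / 2) := by
    rw [← Real.rpow_add hεpos]; ring_nf
  have hne1 : (ε ^ ((a - b) / 2)) ≠ 0 := ne_of_gt hrpos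
  have hne2 : δ ≠ 0 := ne_of_gt hδpos
  have t1 : 2 * Ca * ε ^ a / h = 2 * Ca / δ * ε ^ ((a + b) / 2) := by
    rw [hh, hsplit1]; field_simp
  have t2 : h * (Cb * ε ^ b) = Cb * δ * ε ^ ((a + b) / 2) := by
    rw [hh, ← hsplit2]; ring
  have hfinal : 2 * Ca * ε ^ a / h + h * (Cb * ε ^ b)
      = (2 * Ca / δ + Cb * δ) * ε ^ ((a + b) / 2) := by
    rw [t1, t2]; ring
  rw [hxval]
  rw [hfinal] at hmain
  exact hmain

/-- **Iterated Landau estimate (Lemma with the sequence `r_k`).**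
Let `r 1 = 0`, `r (k+1) = (1+r k)²/4`. If `c(ε,·)` has partial derivatives `cm m` of all
orders `m` in the `i`-th coordinate direction on `Ω` (with `cm 0 = c`),
`sup_L |c(ε,·)| = O(ε^q)` and `sup_L |∂_i^m c(ε,·)| = O(1)` for all `m ≥ 1`, then for every
`k ≥ 1`, `sup_K |∂_i c(ε,·)| = O(ε^{(1+r_k)q/2})`, where `K ⊆ interior L`, `L ⊆ Ω` compact. -/
theorem landau_iterated {s : ℕ}
    (r : ℕ → ℝ) (hr1 : r 1 = 0) (hrec : ∀ k : ℕ, 1 ≤ k → r (k + 1) = (1 + r k) ^ 2 / 4)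
    (Ω : Set (Fin s → ℝ)) (hΩ : IsOpen Ω) (i : Fin s)
    (q : ℝ) (hq : 0 < q)
    (K L : Set (Fin s → ℝ)) (hK : IsCompact K) (hL : IsCompact L)
    (hKL : K ⊆ interior L) (hLΩ : L ⊆ Ω)
    (cm : ℕ → ℝ → (Fin s → ℝ) → ℝ)
    (hd : ∀ m : ℕ, ∀ ε ∈ Ioc (0:ℝ) 1, ∀ x ∈ Ω,
      HasDerivAt (fun t => cm m ε (Function.update x i t)) (cm (m + 1) ε x) (x i))
    (h0 : ∃ C > (0:ℝ), ∃ ε₀ ∈ Ioc (0:ℝ) 1, ∀ ε ∈ Ioo (0:ℝ) ε₀, ∀ x ∈ L,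
      |cm 0 ε x| ≤ C * ε ^ q)
    (hbd : ∀ m : ℕ, 1 ≤ m → ∃ C > (0:ℝ), ∃ ε₀ ∈ Ioc (0:ℝ) 1, ∀ ε ∈ Ioo (0:ℝ) ε₀, ∀ x ∈ L,
      |cm m ε x| ≤ C) :
    ∀ k : ℕ, 1 ≤ k →
      ∃ C > (0:ℝ), ∃ ε₀ ∈ Ioc (0:ℝ) 1, ∀ ε ∈ Ioo (0:ℝ) ε₀, ∀ x ∈ K,
        |cm 1 ε x| ≤ C * ε ^ ((1 + r k) * q / 2) := by
  -- bounds on r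
  have hrbd : ∀ k : ℕ, 1 ≤ k → 0 ≤ r k ∧ r k ≤ 1 := by
    intro k hk
    induction k, hk using Nat.le_induction with
    | base => rw [hr1]; norm_num
    | succ n hn ih =>
      rw [hrec n hn]
      constructor
      · positivity
      · nlinarith [ih.1, ih.2]
  -- the strengthened induction
  have P : ∀ k : ℕ, 1 ≤ k → ∀ m : ℕ, ∀ K' L' : Set (Fin s → ℝ), IsCompact K' →
      K' ⊆ interior L' → L' ⊆ L → ∀ a : ℝ, 0 < a →
      (∃ C > (0:ℝ), ∃ ε₀ ∈ Ioc (0:ℝ) 1, ∀ ε ∈ Ioo (0:ℝ) ε₀, ∀ x ∈ L',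
        |cm m ε x| ≤ C * ε ^ a) →
      ∃ C > (0:ℝ), ∃ ε₀ ∈ Ioc (0:ℝ) 1, ∀ ε ∈ Ioo (0:ℝ) ε₀, ∀ x ∈ K',
        |cm (m + 1) ε x| ≤ C * ε ^ ((1 + r k) * a / 2) := by
    intro k hk
    induction k, hk using Nat.le_induction with
    | base =>
      intro m K' L' hK' hKL' hL'L a ha hA
      have hL'Ω : L' ⊆ Ω := hL'L.trans hLΩ
      obtain ⟨Cb, hCb, ε₀, hε₀, hBb⟩ := hbd (m + 2) (by omega)
      have hB : ∃ C > (0:ℝ), ∃ ε₀ ∈ Ioc (0:ℝ) 1, ∀ ε ∈ Ioo (0:ℝ) ε₀, ∀ x ∈ L',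
          |cm (m + 2) ε x| ≤ C * ε ^ (0:ℝ) := by
        refine ⟨Cb, hCb, ε₀, hε₀, fun ε hε x hx => ?_⟩
        rw [Real.rpow_zero, mul_one]
        exact hBb ε hε x (hL'L hx)
      have := landau_core Ω i cm hd m K' L' hK' hKL' hL'Ω a 0 le_rfl ha.le hA hB
      rw [hr1]
      convert this using 4 with C _ ε₀'
      norm_num
    | succ n hn ih =>
      intro m K' L' hK' hKL' hL'L a ha hA
      obtain ⟨M₁, hM₁c, hKM₁, hM₁L'⟩ :=
        exists_compact_between hK' isOpen_interior hKL'
      obtain ⟨M₂, hM₂c, hKM₂, hM₂M₁⟩ :=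
        exists_compact_between hK' isOpen_interior hKM₁
      have hM₁L : M₁ ⊆ L := (hM₁L'.trans interior_subset).trans hL'L
      have hM₂L' : M₂ ⊆ L' := (hM₂M₁.trans interior_subset).trans
        (hM₁L'.trans interior_subset)
      have hB1 := ih m M₁ L' hM₁c hM₁L' hL'L a ha hA
      have ha1 : 0 < (1 + r n) * a / 2 := by
        have := (hrbd n hn).1; positivity
      have hB2 := ih (m + 1) M₂ M₁ hM₂c hM₂M₁ hM₁L ((1 + r n) * a / 2) ha1 hB1
      have hAM₂ : ∃ C > (0:ℝ), ∃ ε₀ ∈ Ioc (0:ℝ) 1, ∀ ε ∈ Ioo (0:ℝ) ε₀, ∀ x ∈ M₂,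
          |cm m ε x| ≤ C * ε ^ a := by
        obtain ⟨C, hC, ε₀, hε₀, hA'⟩ := hA
        exact ⟨C, hC, ε₀, hε₀, fun ε hε x hx => hA' ε hε x (hM₂L' hx)⟩
      set b : ℝ := (1 + r n) * ((1 + r n) * a / 2) / 2 with hbdef
      have hrn0 := (hrbd n hn).1
      have hrn1 := (hrbd n hn).2
      have hb0 : 0 ≤ b := by positivity
      have hbale : b ≤ a := by rw [hbdef]; nlinarith
      have hM₂Ω : M₂ ⊆ Ω := (hM₂L'.trans hL'L).trans hLΩ
      have key := landau_core Ω i cm hd m K' M₂ hK' hKM₂ hM₂Ω a b hb0 hbale hAM₂ hB2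
      have hexp : (a + b) / 2 = (1 + r (n + 1)) * a / 2 := by
        rw [hrec n hn, hbdef]; ring
      rw [← hexp]
      exact key
  intro k hk
  have := P k hk 0 K L hK hKL subset_rfl q hq h0
  exact this
end

section
/- Derivative transfer for asymptotically small smooth families (analytic core of the theorem that every test object of type [A_g]_q is of type [A_g^∞]_{q-1}): Let Ω ⊆ ℝ^s be open, let q ∈ ℕ with q ≥ 2, and let c : (0,1] × Ω → ℝ be such that for each ε the map x ↦ c(ε,x) is smooth on Ω. Assume that for every compact L ⊆ Ω and every multi-index β, sup_{x∈L} |∂^β c(ε,x)| = O(1) as ε → 0⁺, and that for every compact L ⊆ Ω, sup_{x∈L} |c(ε,x)| = O(ε^q) as ε → 0⁺. Then for every compact K ⊆ Ω and every multi-index β, sup_{x∈K} |∂^β c(ε,x)| = O(ε^{q-1}) as ε → 0⁺. -/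
open Set

/-- Partial derivative in the `i`-th coordinate direction. -/
noncomputable def pd {s : ℕ} (i : Fin s) (f : (Fin s → ℝ) → ℝ) : (Fin s → ℝ) → ℝ :=
  fun x => deriv (fun t => f (Function.update x i t)) (x i)

/-- Iterated partial derivative `∂^β` along a finite sequence of coordinate directions
(a multi-index). -/
noncomputable def pdMulti {s : ℕ} : List (Fin s) → ((Fin s → ℝ) → ℝ) → (Fin s → ℝ) → ℝ
  | [], f => f
  | i :: l, f => pd i (pdMulti l f)

namespace DT

variable {s : ℕ}

/-- standard basis vector -/
def ee (i : Fin s) : Fin s → ℝ := Pi.single i 1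

lemma update_eq_add_smul (x : Fin s → ℝ) (i : Fin s) (t : ℝ) :
    x + t • ee i = Function.update x i (x i + t) := by
  funext j
  by_cases h : j = i
  · subst h; simp [ee]
  · simp [Function.update_of_ne h, ee, Pi.single_eq_of_ne h]

lemma pdMulti_append (l₁ l₂ : List (Fin s)) (f : (Fin s → ℝ) → ℝ) :
    pdMulti (l₁ ++ l₂) f = pdMulti l₁ (pdMulti l₂ f) := by
  induction l₁ with
  | nil => rfl
  | cons i l ih => simp [pdMulti, ih]

lemma pd_line (G : (Fin s → ℝ) → ℝ) (x : Fin s → ℝ) (i : Fin s) (t : ℝ) :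
    pd i G (x + t • ee i) = deriv (fun u => G (x + u • ee i)) t := by
  have h1 : ∀ u : ℝ, x + u • ee i = Function.update x i (x i + u) :=
    update_eq_add_smul x i
  rw [h1 t]
  show deriv (fun u => G (Function.update (Function.update x i (x i + t)) i u))
      ((Function.update x i (x i + t)) i) = _
  simp only [Function.update_idem, Function.update_self]
  have h2 : (fun u : ℝ => G (x + u • ee i))
      = fun u => G (Function.update x i (x i + u)) := by
    funext u; rw [h1]
  rw [h2]
  exact (deriv_comp_const_add (fun v => G (Function.update x i v)) (x i) t).symm

lemma iteratedDeriv_line (G : (Fin s → ℝ) → ℝ) (x : Fin s → ℝ) (i : Fin s) (r : ℕ) (t : ℝ) :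
    iteratedDeriv r (fun u => G (x + u • ee i)) t
      = pdMulti (List.replicate r i) G (x + t • ee i) := by
  induction r generalizing t with
  | zero => simp [pdMulti]
  | succ r ih =>
    rw [iteratedDeriv_succ]
    have h1 : iteratedDeriv r (fun u => G (x + u • ee i))
        = fun u => pdMulti (List.replicate r i) G (x + u • ee i) := funext fun u => ih u
    rw [h1, List.replicate_succ]
    show deriv _ t = pd i (pdMulti (List.replicate r i) G) (x + t • ee i)
    rw [pd_line]


lemma hasDerivAt_update (x : Fin s → ℝ) (i : Fin s) (t : ℝ) :
    HasDerivAt (fun u => Function.update x i u) (ee i) t := by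
  have heq : (fun u : ℝ => Function.update x i u)
      = fun u => x + (u - x i) • ee i := by
    funext u
    rw [update_eq_add_smul, add_sub_cancel]
  rw [heq]
  have h1 : HasDerivAt (fun u : ℝ => u - x i) 1 t := (hasDerivAt_id t).sub_const _
  have h2 := (h1.smul_const (ee i)).const_add x
  simpa using h2

lemma pd_eq_fderiv {Ω : Set (Fin s → ℝ)} (hΩ : IsOpen Ω) {f : (Fin s → ℝ) → ℝ}
    (hf : DifferentiableOn ℝ f Ω) {x : Fin s → ℝ} (hx : x ∈ Ω) (i : Fin s) :
    pd i f x = fderiv ℝ f x (ee i) := by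
  have hdf : DifferentiableAt ℝ f x := hf.differentiableAt (hΩ.mem_nhds hx)
  have hu : HasDerivAt (fun u => Function.update x i u) (ee i) (x i) :=
    hasDerivAt_update x i (x i)
  have hc : HasDerivAt (fun u => f (Function.update x i u)) (fderiv ℝ f x (ee i)) (x i) := by
    have hl : HasFDerivAt f (fderiv ℝ f x) (Function.update x i (x i)) := by
      rw [Function.update_eq_self]; exact hdf.hasFDerivAt
    have h1 := HasFDerivAt.comp_hasDerivAt (x i) hl hu
    exact h1
  exact hc.deriv

lemma pd_contDiffOn {Ω : Set (Fin s → ℝ)} (hΩ : IsOpen Ω) {f : (Fin s → ℝ) → ℝ}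
    (hf : ContDiffOn ℝ (⊤ : ℕ∞) f Ω) (i : Fin s) :
    ContDiffOn ℝ (⊤ : ℕ∞) (pd i f) Ω := by
  have h1 : ContDiffOn ℝ (⊤ : ℕ∞) (fun x => fderiv ℝ f x (ee i)) Ω := by
    have h2 : ContDiffOn ℝ (⊤ : ℕ∞) (fderiv ℝ f) Ω :=
      hf.fderiv_of_isOpen hΩ (by exact_mod_cast le_top)
    exact h2.clm_apply contDiffOn_const
  refine h1.congr fun x hx => ?_
  exact pd_eq_fderiv hΩ (hf.differentiableOn (by simp)) hx i

lemma pdMulti_contDiffOn {Ω : Set (Fin s → ℝ)} (hΩ : IsOpen Ω) {f : (Fin s → ℝ) → ℝ}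
    (hf : ContDiffOn ℝ (⊤ : ℕ∞) f Ω) (β : List (Fin s)) :
    ContDiffOn ℝ (⊤ : ℕ∞) (pdMulti β f) Ω := by
  induction β with
  | nil => exact hf
  | cons i l ih => exact pd_contDiffOn hΩ ih i


lemma exists_weights (M : ℕ) (hM : 2 ≤ M) :
    ∃ W : Fin M → ℝ, ∀ r : ℕ, r < M →
      ∑ j : Fin M, W j * (j : ℝ) ^ r = if r = 1 then 1 else 0 := by
  set v : Fin M → ℝ := fun j => ((j : ℕ) : ℝ) with hv
  have hvinj : Function.Injective v := by
    intro a b hab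
    exact Fin.ext (Nat.cast_injective hab)
  set A : Matrix (Fin M) (Fin M) ℝ := (Matrix.vandermonde v).transpose with hA
  have hdet : A.det ≠ 0 := by
    rw [hA, Matrix.det_transpose, Matrix.det_vandermonde_ne_zero_iff]
    exact hvinj
  have hunit : IsUnit A.det := isUnit_iff_ne_zero.mpr hdet
  set b : Fin M → ℝ := fun r => if (r : ℕ) = 1 then 1 else 0 with hb
  refine ⟨A⁻¹.mulVec b, ?_⟩
  intro r hr
  have h1 : A.mulVec (A⁻¹.mulVec b) = b := by
    rw [Matrix.mulVec_mulVec, Matrix.mul_nonsing_inv _ hunit, Matrix.one_mulVec]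
  have h2 := congrFun h1 ⟨r, hr⟩
  have h3 : A.mulVec (A⁻¹.mulVec b) ⟨r, hr⟩
      = ∑ j : Fin M, (A⁻¹.mulVec b) j * (j : ℝ) ^ r := by
    simp only [Matrix.mulVec, dotProduct, hA, Matrix.transpose_apply,
      Matrix.vandermonde, Matrix.of_apply, hv]
    exact Finset.sum_congr rfl fun j _ => mul_comm _ _
  rw [h3] at h2
  rw [h2, hb]


lemma within_eq_global (ψ : ℝ → ℝ) {U : Set ℝ} (hU : IsOpen U)
    (hψ : ContDiffOn ℝ (⊤ : ℕ∞) ψ U) {T : ℝ} (hT : 0 < T)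
    (hsub : Icc (0:ℝ) T ⊆ U) (r : ℕ) {y : ℝ} (hy : y ∈ Icc (0:ℝ) T) :
    iteratedDerivWithin r ψ (Icc (0:ℝ) T) y = iteratedDeriv r ψ y := by
  have hTay : HasFTaylorSeriesUpToOn ((⊤:ℕ∞) : WithTop ℕ∞) ψ (ftaylorSeriesWithin ℝ ψ U) U :=
    hψ.ftaylorSeriesWithin hU.uniqueDiffOn
  have h1 := (hTay.mono hsub).eq_iteratedFDerivWithin_of_uniqueDiffOn
    (m := r) (by exact_mod_cast le_top) (uniqueDiffOn_Icc hT) hy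
  have h2 : ftaylorSeriesWithin ℝ ψ U y r = iteratedFDerivWithin ℝ r ψ U y := rfl
  have h3 : iteratedFDerivWithin ℝ r ψ U y = iteratedFDeriv ℝ r ψ y :=
    iteratedFDerivWithin_of_isOpen r hU (hsub hy)
  rw [iteratedDerivWithin_eq_iteratedFDerivWithin, iteratedDeriv_eq_iteratedFDeriv,
    ← h1, h2, h3]

lemma taylor_fd {n : ℕ} (hn : 1 ≤ n) (W : Fin (n+1) → ℝ)
    (hW : ∀ r : ℕ, r < n+1 → ∑ j : Fin (n+1), W j * (j : ℝ) ^ r = if r = 1 then 1 else 0)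
    (ψ : ℝ → ℝ) {U : Set ℝ} (hU : IsOpen U) (hψ : ContDiffOn ℝ (⊤ : ℕ∞) ψ U)
    {h B : ℝ} (hh : 0 < h) (hB : 0 ≤ B)
    (hsub : Icc (0:ℝ) ((n:ℝ) * h) ⊆ U)
    (hbound : ∀ y ∈ Icc (0:ℝ) ((n:ℝ) * h), |iteratedDeriv (n+1) ψ y| ≤ B) :
    |h * deriv ψ 0 - ∑ j : Fin (n+1), W j * ψ ((j : ℝ) * h)|
      ≤ (∑ j : Fin (n+1), |W j|) * ((n:ℝ) ^ (n+1) / n.factorial) * B * h ^ (n+1) := by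
  set T := (n:ℝ) * h with hTdef
  have hT : 0 < T := by positivity
  have key : ∀ (r : ℕ), ∀ y ∈ Icc (0:ℝ) T, iteratedDerivWithin r ψ (Icc (0:ℝ) T) y
      = iteratedDeriv r ψ y := fun r y hy => within_eq_global ψ hU hψ hT hsub r hy
  have h0T : (0:ℝ) ∈ Icc (0:ℝ) T := ⟨le_refl 0, le_of_lt hT⟩
  -- nodes
  have hnode : ∀ j : Fin (n+1), (j : ℝ) * h ∈ Icc (0:ℝ) T := by
    intro j
    constructor
    · positivity
    · apply mul_le_mul_of_nonneg_right _ (le_of_lt hh)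
      exact_mod_cast Nat.lt_succ_iff.mp j.isLt
  -- Taylor remainder at each node
  have hcd : ContDiffOn ℝ (n+1 : ℕ) ψ (Icc (0:ℝ) T) :=
    (hψ.of_le (by exact_mod_cast le_top)).mono hsub
  have hC : ∀ y ∈ Icc (0:ℝ) T,
      ‖iteratedDerivWithin (n+1) ψ (Icc (0:ℝ) T) y‖ ≤ B := by
    intro y hy
    rw [key (n+1) y hy]
    exact hbound y hy
  have hrem : ∀ j : Fin (n+1),
      |ψ ((j:ℝ) * h) - taylorWithinEval ψ n (Icc (0:ℝ) T) 0 ((j:ℝ)*h)|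
        ≤ B * ((n:ℝ)^(n+1) / n.factorial) * h^(n+1) := by
    intro j
    have h1 := taylor_mean_remainder_bound (le_of_lt hT) hcd (hnode j) hC
    rw [Real.norm_eq_abs] at h1
    refine h1.trans ?_
    rw [sub_zero]
    have h2 : ((j:ℝ) * h) ^ (n+1) ≤ (n:ℝ)^(n+1) * h^(n+1) := by
      rw [mul_pow]
      apply mul_le_mul_of_nonneg_right _ (by positivity)
      apply pow_le_pow_left₀ (by positivity)
      exact_mod_cast Nat.lt_succ_iff.mp j.isLt
    calc B * ((j:ℝ) * h) ^ (n+1) / n.factorial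
        ≤ B * ((n:ℝ)^(n+1) * h^(n+1)) / n.factorial := by
          apply div_le_div_of_nonneg_right ?_ (by positivity)
          exact mul_le_mul_of_nonneg_left h2 hB
      _ = B * ((n:ℝ)^(n+1) / n.factorial) * h^(n+1) := by ring
  -- the Taylor polynomial part
  set D : ℕ → ℝ := fun r => iteratedDerivWithin r ψ (Icc (0:ℝ) T) 0 with hD
  have hpoly : ∀ j : Fin (n+1), taylorWithinEval ψ n (Icc (0:ℝ) T) 0 ((j:ℝ)*h)
      = ∑ r ∈ Finset.range (n+1), ((r.factorial : ℝ)⁻¹ * (j:ℝ)^r * h^r) * D r := by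
    intro j
    rw [taylor_within_apply]
    refine Finset.sum_congr rfl fun r _ => ?_
    rw [smul_eq_mul, sub_zero, mul_pow]
    ring
  -- swap sums
  have hswap : ∑ j : Fin (n+1), W j * taylorWithinEval ψ n (Icc (0:ℝ) T) 0 ((j:ℝ)*h)
      = h * D 1 := by
    calc ∑ j : Fin (n+1), W j * taylorWithinEval ψ n (Icc (0:ℝ) T) 0 ((j:ℝ)*h)
        = ∑ j : Fin (n+1), ∑ r ∈ Finset.range (n+1),
            W j * (((r.factorial : ℝ)⁻¹ * (j:ℝ)^r * h^r) * D r) := by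
          refine Finset.sum_congr rfl fun j _ => ?_
          rw [hpoly j, Finset.mul_sum]
      _ = ∑ r ∈ Finset.range (n+1), ∑ j : Fin (n+1),
            W j * (((r.factorial : ℝ)⁻¹ * (j:ℝ)^r * h^r) * D r) := Finset.sum_comm
      _ = ∑ r ∈ Finset.range (n+1), ((r.factorial : ℝ)⁻¹ * h^r * D r)
            * (∑ j : Fin (n+1), W j * (j:ℝ)^r) := by
          refine Finset.sum_congr rfl fun r _ => ?_
          rw [Finset.mul_sum]
          refine Finset.sum_congr rfl fun j _ => ?_
          ring
      _ = ∑ r ∈ Finset.range (n+1), ((r.factorial : ℝ)⁻¹ * h^r * D r)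
            * (if r = 1 then 1 else 0) := by
          refine Finset.sum_congr rfl fun r hr => ?_
          rw [hW r (Finset.mem_range.mp hr)]
      _ = h * D 1 := by
          rw [Finset.sum_eq_single 1]
          · simp
          · intro r _ hr1; rw [if_neg hr1, mul_zero]
          · intro habs
            exact absurd (Finset.mem_range.mpr (by omega)) habs
  have hD1 : h * D 1 = h * deriv ψ 0 := by
    rw [hD]
    simp only []
    rw [key 1 0 h0T, iteratedDeriv_one]
  have hdiff : h * deriv ψ 0 - ∑ j : Fin (n+1), W j * ψ ((j:ℝ) * h)
      = ∑ j : Fin (n+1), W j * (taylorWithinEval ψ n (Icc (0:ℝ) T) 0 ((j:ℝ)*h) - ψ ((j:ℝ)*h)) := by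
    rw [← hD1, ← hswap, ← Finset.sum_sub_distrib]
    refine Finset.sum_congr rfl fun j _ => ?_
    ring
  rw [hdiff]
  calc |∑ j : Fin (n+1), W j * (taylorWithinEval ψ n (Icc (0:ℝ) T) 0 ((j:ℝ)*h) - ψ ((j:ℝ)*h))|
      ≤ ∑ j : Fin (n+1), |W j| * (B * ((n:ℝ)^(n+1) / n.factorial) * h^(n+1)) := by
        refine (Finset.abs_sum_le_sum_abs _ _).trans ?_
        refine Finset.sum_le_sum fun j _ => ?_
        rw [abs_mul]
        refine mul_le_mul_of_nonneg_left ?_ (abs_nonneg _)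
        rw [abs_sub_comm]
        exact hrem j
    _ = (∑ j : Fin (n+1), |W j|) * ((n:ℝ) ^ (n+1) / n.factorial) * B * h ^ (n+1) := by
        rw [← Finset.sum_mul]
        ring


lemma ee_norm_le (i : Fin s) : ‖ee i‖ ≤ 1 := by
  refine (pi_norm_le_iff_of_nonneg zero_le_one).mpr fun j => ?_
  simp only [ee, Real.norm_eq_abs, Pi.single_apply]
  split_ifs <;> norm_num

lemma dist_add_smul (x : Fin s → ℝ) (a : ℝ) (z : Fin s → ℝ) :
    dist (x + a • z) x = |a| * ‖z‖ := by
  rw [dist_eq_norm, add_sub_cancel_left, norm_smul, Real.norm_eq_abs]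

lemma FD {Ω : Set (Fin s → ℝ)} (hΩ : IsOpen Ω) (M : ℕ) (hM : 2 ≤ M) (β : List (Fin s)) :
    ∃ (N : ℕ) (w : Fin N → ℝ) (v : Fin N → (Fin s → ℝ)) (C R : ℝ), 0 ≤ C ∧ 0 ≤ R ∧
      (∀ p, ‖v p‖ ≤ R) ∧
      ∀ (f : (Fin s → ℝ) → ℝ), ContDiffOn ℝ (⊤ : ℕ∞) f Ω →
      ∀ (x : Fin s → ℝ) (h B : ℝ), 0 < h → h ≤ 1 → 0 ≤ B →
        Metric.closedBall x (R * h) ⊆ Ω →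
        (∀ γ : List (Fin s), γ.length ≤ M + β.length →
          ∀ y ∈ Metric.closedBall x (R * h), |pdMulti γ f y| ≤ B) →
        |h ^ β.length * pdMulti β f x - ∑ p : Fin N, w p * f (x + h • v p)|
          ≤ C * h ^ M * B := by
  induction β with
  | nil =>
    refine ⟨1, fun _ => 1, fun _ => 0, 0, 0, le_refl 0, le_refl 0, fun p => by simp, ?_⟩
    intro f hf x h B hh hh1 hB hball hbnd
    have : |h ^ ([] : List (Fin s)).length * pdMulti [] f x
        - ∑ p : Fin 1, (1:ℝ) * f (x + h • 0)| = 0 := by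
      simp [pdMulti]
    rw [this]
    positivity
  | cons i β' ih =>
    obtain ⟨n, rfl⟩ : ∃ n, M = n + 1 := ⟨M - 1, by omega⟩
    have hn : 1 ≤ n := by omega
    obtain ⟨W, hW⟩ := exists_weights (n+1) (by omega)
    obtain ⟨N', w', v', C', R', hC'0, hR'0, hv', IH⟩ := ih
    set Wsum : ℝ := ∑ j : Fin (n+1), |W j| with hWsumdef
    have hWsum0 : 0 ≤ Wsum := Finset.sum_nonneg fun j _ => abs_nonneg _
    set Cτ : ℝ := Wsum * ((n:ℝ) ^ (n+1) / n.factorial) with hCτdef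
    have hCτ0 : 0 ≤ Cτ := by positivity
    set k' := β'.length with hk'def
    refine ⟨(n+1) * N',
      fun p => W (finProdFinEquiv.symm p).1 * w' (finProdFinEquiv.symm p).2,
      fun p => (((finProdFinEquiv.symm p).1 : ℕ) : ℝ) • ee i + v' (finProdFinEquiv.symm p).2,
      Cτ + Wsum * C', (n : ℝ) + R', by positivity, by positivity, ?_, ?_⟩
    · intro p
      refine (norm_add_le _ _).trans ?_
      have h1 : ‖(((finProdFinEquiv.symm p).1 : ℕ) : ℝ) • ee i‖ ≤ (n : ℝ) := by
        rw [norm_smul, Real.norm_eq_abs]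
        have h2 : |(((finProdFinEquiv.symm p).1 : ℕ) : ℝ)| ≤ (n:ℝ) := by
          rw [abs_of_nonneg (by positivity)]
          exact_mod_cast Nat.lt_succ_iff.mp (finProdFinEquiv.symm p).1.isLt
        calc |(((finProdFinEquiv.symm p).1 : ℕ) : ℝ)| * ‖ee i‖
            ≤ (n:ℝ) * 1 := mul_le_mul h2 (ee_norm_le i) (norm_nonneg _) (by positivity)
          _ = (n:ℝ) := mul_one _
      exact add_le_add h1 (hv' _)
    · intro f hf x h B hh hh1 hB hball hbnd
      set g := pdMulti β' f with hgdef
      set pt : Fin (n+1) → (Fin s → ℝ) := fun j => x + (((j:ℕ):ℝ) * h) • ee i with hptdef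
      have hptball : ∀ j : Fin (n+1), ∀ ρ, 0 ≤ ρ → ρ + (n:ℝ) * h ≤ ((n:ℝ) + R') * h →
          Metric.closedBall (pt j) ρ ⊆ Metric.closedBall x (((n:ℝ) + R') * h) := by
        intro j ρ hρ hρ2
        refine Metric.closedBall_subset_closedBall' ?_
        have hd : dist (pt j) x ≤ (n:ℝ) * h := by
          rw [hptdef]
          simp only []
          rw [dist_add_smul]
          have h1 : |((j:ℕ):ℝ) * h| ≤ (n:ℝ) * h := by
            rw [abs_of_nonneg (by positivity)]
            apply mul_le_mul_of_nonneg_right _ (le_of_lt hh)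
            exact_mod_cast Nat.lt_succ_iff.mp j.isLt
          calc |((j:ℕ):ℝ) * h| * ‖ee i‖ ≤ ((n:ℝ) * h) * 1 :=
                mul_le_mul h1 (ee_norm_le i) (norm_nonneg _) (by positivity)
            _ = (n:ℝ) * h := mul_one _
        linarith
      -- the line function
      set ψ : ℝ → ℝ := fun u => g (x + u • ee i) with hψdef
      set U : Set ℝ := {t : ℝ | x + t • ee i ∈ Ω} with hUdef
      have hUopen : IsOpen U := by
        have hcont : Continuous (fun t : ℝ => x + t • ee i) :=
          continuous_const.add (continuous_id.smul continuous_const)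
        exact hΩ.preimage hcont
      have hg : ContDiffOn ℝ (⊤ : ℕ∞) g Ω := pdMulti_contDiffOn hΩ hf β'
      have hψsm : ContDiffOn ℝ (⊤ : ℕ∞) ψ U := by
        refine hg.comp ?_ fun t ht => ht
        exact (contDiff_const.add (contDiff_id.smul contDiff_const)).contDiffOn
      have hIccball : ∀ t ∈ Icc (0:ℝ) ((n:ℝ) * h),
          x + t • ee i ∈ Metric.closedBall x (((n:ℝ) + R') * h) := by
        intro t ht
        rw [Metric.mem_closedBall, dist_add_smul]
        calc |t| * ‖ee i‖ ≤ ((n:ℝ) * h) * 1 := by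
              refine mul_le_mul ?_ (ee_norm_le i) (norm_nonneg _) (by positivity)
              rw [abs_of_nonneg ht.1]; exact ht.2
          _ ≤ ((n:ℝ) + R') * h := by nlinarith
      have hsubU : Icc (0:ℝ) ((n:ℝ) * h) ⊆ U := fun t ht => hball (hIccball t ht)
      have hbψ : ∀ y ∈ Icc (0:ℝ) ((n:ℝ) * h), |iteratedDeriv (n+1) ψ y| ≤ B := by
        intro y hy
        rw [hψdef]
        rw [iteratedDeriv_line g x i (n+1) y, hgdef, ← pdMulti_append]
        refine hbnd _ ?_ _ (hIccball y hy)
        simp only [List.length_append, List.length_replicate, List.length_cons]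
        omega
      have A := taylor_fd hn W hW ψ hUopen hψsm hh hB hsubU hbψ
      have hd0 : deriv ψ 0 = pd i g x := by
        rw [hψdef]
        rw [← pd_line g x i 0]
        simp
      rw [hd0] at A
      -- Step 1 scaled by h^k'
      have E1 : |h^(k'+1) * pd i g x - h^(k') * ∑ j : Fin (n+1), W j * ψ (((j:ℕ):ℝ) * h)|
          ≤ Cτ * h^(n+1) * B := by
        have heq : h^(k'+1) * pd i g x - h^(k') * ∑ j : Fin (n+1), W j * ψ (((j:ℕ):ℝ) * h)
            = h^(k') * (h * pd i g x - ∑ j : Fin (n+1), W j * ψ (((j:ℕ):ℝ) * h)) := by ring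
        rw [heq, abs_mul, abs_pow, abs_of_pos hh]
        calc h^(k') * |h * pd i g x - ∑ j : Fin (n+1), W j * ψ (((j:ℕ):ℝ) * h)|
            ≤ 1 * (Wsum * ((n:ℝ) ^ (n+1) / n.factorial) * B * h ^ (n+1)) := by
              refine mul_le_mul (pow_le_one₀ (le_of_lt hh) hh1) A (abs_nonneg _) zero_le_one
          _ = Cτ * h^(n+1) * B := by rw [hCτdef]; ring
      -- Step 2: IH at each node
      have E2 : ∀ j : Fin (n+1),
          |h^(k') * g (pt j) - ∑ p : Fin N', w' p * f (pt j + h • v' p)|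
            ≤ C' * h^(n+1) * B := by
        intro j
        have hb2 : Metric.closedBall (pt j) (R' * h) ⊆ Metric.closedBall x (((n:ℝ) + R') * h) := by
          refine hptball j (R' * h) (by positivity) (by ring_nf; nlinarith)
        refine IH f hf (pt j) h B hh hh1 hB (fun y hy => hball (hb2 hy)) ?_
        intro γ hγ y hy
        refine hbnd γ (by simp only [List.length_cons]; omega) y (hb2 hy)
      -- sum transport
      have hsum : ∑ p : Fin ((n+1) * N'),
            (W (finProdFinEquiv.symm p).1 * w' (finProdFinEquiv.symm p).2)
              * f (x + h • ((((finProdFinEquiv.symm p).1 : ℕ) : ℝ) • ee i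
                  + v' (finProdFinEquiv.symm p).2))
          = ∑ j : Fin (n+1), W j * ∑ p : Fin N', w' p * f (pt j + h • v' p) := by
        refine Eq.trans (Equiv.sum_comp (finProdFinEquiv.symm :
            Fin ((n+1)*N') ≃ Fin (n+1) × Fin N')
          (fun q : Fin (n+1) × Fin N' => (W q.1 * w' q.2)
            * f (x + h • (((q.1 : ℕ) : ℝ) • ee i + v' q.2)))) ?_
        rw [Fintype.sum_prod_type]
        refine Finset.sum_congr rfl fun j _ => ?_
        rw [Finset.mul_sum]
        refine Finset.sum_congr rfl fun p _ => ?_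
        have hpteq : pt j + h • v' p = x + h • (((j : ℕ) : ℝ) • ee i + v' p) := by
          rw [hptdef]
          simp only []
          rw [smul_add, smul_smul, add_assoc, mul_comm h]
        rw [hpteq]
        ring
      -- put together
      have hsplit : h ^ (k'+1) * pd i g x
            - ∑ j : Fin (n+1), W j * ∑ p : Fin N', w' p * f (pt j + h • v' p)
          = (h^(k'+1) * pd i g x - h^(k') * ∑ j : Fin (n+1), W j * ψ (((j:ℕ):ℝ) * h))
            + ∑ j : Fin (n+1), W j * (h^(k') * g (pt j)
                - ∑ p : Fin N', w' p * f (pt j + h • v' p)) := by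
        have hgs : h^(k') * ∑ j : Fin (n+1), W j * ψ (((j:ℕ):ℝ) * h)
            = ∑ j : Fin (n+1), W j * (h^(k') * g (pt j)) := by
          rw [Finset.mul_sum]
          refine Finset.sum_congr rfl fun j _ => ?_
          have hψpt : ψ (((j:ℕ):ℝ) * h) = g (pt j) := rfl
          rw [hψpt]; ring
        have h2 : ∑ j : Fin (n+1), W j * (h^(k') * g (pt j)
              - ∑ p : Fin N', w' p * f (pt j + h • v' p))
            = (∑ j : Fin (n+1), W j * (h^(k') * g (pt j)))
              - ∑ j : Fin (n+1), W j * ∑ p : Fin N', w' p * f (pt j + h • v' p) := by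
          simp only [mul_sub, Finset.sum_sub_distrib]
        rw [h2, ← hgs]
        ring
      -- final assembly
      have hgoal : pdMulti (i :: β') f = pd i g := rfl
      have hlen : (i :: β').length = k' + 1 := rfl
      rw [hlen, hgoal, hsum, hsplit]
      refine (abs_add_le _ _).trans ?_
      have E3 : |∑ j : Fin (n+1), W j * (h^(k') * g (pt j)
            - ∑ p : Fin N', w' p * f (pt j + h • v' p))|
          ≤ Wsum * (C' * h^(n+1) * B) := by
        refine (Finset.abs_sum_le_sum_abs _ _).trans ?_
        rw [hWsumdef, Finset.sum_mul]
        refine Finset.sum_le_sum fun j _ => ?_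
        rw [abs_mul]
        exact mul_le_mul_of_nonneg_left (E2 j) (abs_nonneg _)
      calc |h^(k'+1) * pd i g x - h^(k') * ∑ j : Fin (n+1), W j * ψ (((j:ℕ):ℝ) * h)|
            + |∑ j : Fin (n+1), W j * (h^(k') * g (pt j)
                - ∑ p : Fin N', w' p * f (pt j + h • v' p))|
          ≤ Cτ * h^(n+1) * B + Wsum * (C' * h^(n+1) * B) := add_le_add E1 E3
        _ = (Cτ + Wsum * C') * h ^ (n+1) * B := by ring


lemma uniform_bd {L : Set (Fin s → ℝ)} (c : ℝ → (Fin s → ℝ) → ℝ)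
    (hb : ∀ β : List (Fin s), ∃ C > (0:ℝ), ∃ ε₀ ∈ Ioc (0:ℝ) 1, ∀ ε ∈ Ioo (0:ℝ) ε₀,
      ∀ x ∈ L, |pdMulti β (c ε) x| ≤ C) (n : ℕ) :
    ∃ B > (0:ℝ), ∃ ε₁ ∈ Ioc (0:ℝ) 1, ∀ ε ∈ Ioo (0:ℝ) ε₁, ∀ γ : List (Fin s),
      γ.length ≤ n → ∀ y ∈ L, |pdMulti γ (c ε) y| ≤ B := by
  have hfin := List.finite_length_le (Fin s) n
  have claim : ∀ G : Finset (List (Fin s)), ∃ B > (0:ℝ), ∃ ε₁ ∈ Ioc (0:ℝ) 1,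
      ∀ ε ∈ Ioo (0:ℝ) ε₁, ∀ γ ∈ G, ∀ y ∈ L, |pdMulti γ (c ε) y| ≤ B := by
    intro G
    induction G using Finset.induction_on with
    | empty => exact ⟨1, one_pos, 1, ⟨one_pos, le_refl 1⟩, by simp⟩
    | @insert γ G hγG ihG =>
      obtain ⟨B, hB, ε₁, hε₁, hG⟩ := ihG
      obtain ⟨C, hC, ε₂, hε₂, hγ2⟩ := hb γ
      refine ⟨max B C, lt_max_of_lt_left hB, min ε₁ ε₂,
        ⟨lt_min hε₁.1 hε₂.1, min_le_of_left_le hε₁.2⟩, ?_⟩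
      intro ε hε δ hδ y hy
      rcases Finset.mem_insert.mp hδ with rfl | hmem
      · exact (hγ2 ε ⟨hε.1, lt_of_lt_of_le hε.2 (min_le_right _ _)⟩ y hy).trans
          (le_max_right _ _)
      · exact (hG ε ⟨hε.1, lt_of_lt_of_le hε.2 (min_le_left _ _)⟩ δ hmem y hy).trans
          (le_max_left _ _)
  obtain ⟨B, hB, ε₁, hε₁, hG⟩ := claim hfin.toFinset
  exact ⟨B, hB, ε₁, hε₁, fun ε hε γ hγ y hy =>
    hG ε hε γ (hfin.mem_toFinset.mpr hγ) y hy⟩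

end DT

/-- **Derivative transfer for asymptotically small smooth families.**
If `c(ε,·)` is smooth on `Ω`, all its partial derivatives are `O(1)` on compact subsets,
and `sup_L |c(ε,·)| = O(ε^q)` on every compact `L ⊆ Ω` with `q ≥ 2`, then every partial
derivative satisfies `sup_K |∂^β c(ε,·)| = O(ε^{q-1})` on every compact `K ⊆ Ω`. -/


theorem derivative_transfer {s : ℕ}
    (Ω : Set (Fin s → ℝ)) (hΩ : IsOpen Ω)
    (q : ℕ) (hq : 2 ≤ q)
    (c : ℝ → (Fin s → ℝ) → ℝ)
    (hsmooth : ∀ ε ∈ Ioc (0:ℝ) 1, ContDiffOn ℝ (⊤ : ℕ∞) (c ε) Ω)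
    (hbd : ∀ L : Set (Fin s → ℝ), L ⊆ Ω → IsCompact L → ∀ β : List (Fin s),
      ∃ C > (0:ℝ), ∃ ε₀ ∈ Ioc (0:ℝ) 1, ∀ ε ∈ Ioo (0:ℝ) ε₀, ∀ x ∈ L,
        |pdMulti β (c ε) x| ≤ C)
    (hsmall : ∀ L : Set (Fin s → ℝ), L ⊆ Ω → IsCompact L →
      ∃ C > (0:ℝ), ∃ ε₀ ∈ Ioc (0:ℝ) 1, ∀ ε ∈ Ioo (0:ℝ) ε₀, ∀ x ∈ L,
        |c ε x| ≤ C * ε ^ (q:ℝ)) :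
    ∀ K : Set (Fin s → ℝ), K ⊆ Ω → IsCompact K → ∀ β : List (Fin s),
      ∃ C > (0:ℝ), ∃ ε₀ ∈ Ioc (0:ℝ) 1, ∀ ε ∈ Ioo (0:ℝ) ε₀, ∀ x ∈ K,
        |pdMulti β (c ε) x| ≤ C * ε ^ ((q:ℝ) - 1) := by
  intro K hKΩ hK β
  rcases Nat.eq_zero_or_pos β.length with hk0 | hkpos
  · -- zero-order case
    have hβ : β = [] := List.length_eq_zero_iff.mp hk0
    subst hβ
    obtain ⟨C, hC, ε₀, hε₀, hs⟩ := hsmall K hKΩ hK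
    refine ⟨C, hC, ε₀, hε₀, ?_⟩
    intro ε hε x hx
    have hε1 : ε ≤ 1 := le_of_lt (lt_of_lt_of_le hε.2 hε₀.2)
    have h1 : |pdMulti [] (c ε) x| = |c ε x| := rfl
    rw [h1]
    refine (hs ε hε x hx).trans ?_
    have h2 : ε ^ ((q:ℝ)) ≤ ε ^ ((q:ℝ) - 1) :=
      Real.rpow_le_rpow_of_exponent_ge hε.1 hε1 (by linarith)
    exact mul_le_mul_of_nonneg_left h2 (le_of_lt hC)
  · set k := β.length with hkdef
    set m := q - 1 with hmdef
    have hm1 : 1 ≤ m := by omega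
    have hqm : q = m + 1 := by omega
    set M := m * k + k with hMdef
    have hM2 : 2 ≤ M := by
      have h1 : 1 * 1 ≤ m * k := Nat.mul_le_mul hm1 hkpos
      omega
    obtain ⟨N, w, v, C, R, hC0, hR0, hvR, Hmain⟩ := DT.FD hΩ M hM2 β
    obtain ⟨δ, hδ0, hδΩ⟩ := hK.exists_cthickening_subset_open hΩ hKΩ
    set L := Metric.cthickening δ K with hLdef
    have hLc : IsCompact L := hK.cthickening
    have hLΩ : L ⊆ Ω := hδΩ
    obtain ⟨B, hB0, ε₁, hε₁, hBd⟩ := DT.uniform_bd c (hbd L hLΩ hLc) (M + k)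
    obtain ⟨C₀, hC₀, ε₂, hε₂, hsm⟩ := hsmall L hLΩ hLc
    set r := min 1 (δ / (R + 1)) with hrdef
    have hr0 : 0 < r := lt_min one_pos (by positivity)
    have hr1 : r ≤ 1 := min_le_left _ _
    set Wsum := ∑ p : Fin N, |w p| with hWsumdef
    have hWsum0 : 0 ≤ Wsum := Finset.sum_nonneg fun p _ => abs_nonneg _
    refine ⟨C * B + Wsum * C₀ / r ^ k + 1, by positivity, min ε₁ ε₂,
      ⟨lt_min hε₁.1 hε₂.1, min_le_of_left_le hε₁.2⟩, ?_⟩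
    intro ε hε x hx
    have hε0 : 0 < ε := hε.1
    have hεε₁ : ε < ε₁ := lt_of_lt_of_le hε.2 (min_le_left _ _)
    have hεε₂ : ε < ε₂ := lt_of_lt_of_le hε.2 (min_le_right _ _)
    have hε1 : ε ≤ 1 := le_of_lt (lt_of_lt_of_le hεε₁ hε₁.2)
    have hkR : ((k:ℝ)) ≠ 0 := by
      have : 0 < (k:ℝ) := by exact_mod_cast hkpos
      linarith
    set u := ε ^ ((k:ℝ)⁻¹) with hudef
    have hu0 : 0 < u := Real.rpow_pos_of_pos hε0 _
    have hu1 : u ≤ 1 := Real.rpow_le_one (le_of_lt hε0) hε1 (by positivity)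
    set h := r * u with hhdef
    have hh0 : 0 < h := by positivity
    have hh1 : h ≤ 1 := by
      calc r * u ≤ 1 * 1 := mul_le_mul hr1 hu1 (le_of_lt hu0) zero_le_one
        _ = 1 := mul_one 1
    have hRh : R * h ≤ δ := by
      have h1 : r ≤ δ / (R + 1) := min_le_right _ _
      have h2 : R / (R + 1) ≤ 1 := (div_le_one (by positivity)).mpr (by linarith)
      have h3 : R * (δ / (R + 1)) ≤ δ := by
        have : R * (δ / (R + 1)) = δ * (R / (R + 1)) := by ring
        rw [this]
        calc δ * (R / (R + 1)) ≤ δ * 1 := mul_le_mul_of_nonneg_left h2 (le_of_lt hδ0)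
          _ = δ := mul_one δ
      calc R * h = (R * r) * u := by rw [hhdef]; ring
        _ ≤ (R * (δ / (R + 1))) * 1 :=
            mul_le_mul (mul_le_mul_of_nonneg_left h1 hR0) hu1 (le_of_lt hu0) (by positivity)
        _ = R * (δ / (R + 1)) := mul_one _
        _ ≤ δ := h3
    have hballL : Metric.closedBall x (R * h) ⊆ L :=
      (Metric.closedBall_subset_closedBall hRh).trans
        (Metric.closedBall_subset_cthickening hx δ)
    have hballΩ : Metric.closedBall x (R * h) ⊆ Ω := hballL.trans hLΩ
    have hbnd : ∀ γ : List (Fin s), γ.length ≤ M + k →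
        ∀ y ∈ Metric.closedBall x (R * h), |pdMulti γ (c ε) y| ≤ B :=
      fun γ hγ y hy => hBd ε ⟨hε0, hεε₁⟩ γ hγ y (hballL hy)
    have E := Hmain (c ε) (hsmooth ε ⟨hε0, hε1⟩) x h B hh0 hh1 (le_of_lt hB0) hballΩ hbnd
    have hS : |∑ p : Fin N, w p * c ε (x + h • v p)| ≤ Wsum * (C₀ * ε ^ (q:ℝ)) := by
      refine (Finset.abs_sum_le_sum_abs _ _).trans ?_
      rw [hWsumdef, Finset.sum_mul]
      refine Finset.sum_le_sum fun p _ => ?_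
      rw [abs_mul]
      refine mul_le_mul_of_nonneg_left ?_ (abs_nonneg _)
      refine hsm ε ⟨hε0, hεε₂⟩ _ (hballL ?_)
      rw [Metric.mem_closedBall, DT.dist_add_smul, abs_of_pos hh0, mul_comm]
      exact mul_le_mul_of_nonneg_right (hvR p) (le_of_lt hh0)
    have E2 : |h ^ k * pdMulti β (c ε) x| ≤ C * h ^ M * B + Wsum * (C₀ * ε ^ (q:ℝ)) := by
      have h1 : h ^ k * pdMulti β (c ε) x
          = (h ^ k * pdMulti β (c ε) x - ∑ p : Fin N, w p * c ε (x + h • v p))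
            + ∑ p : Fin N, w p * c ε (x + h • v p) := by ring
      rw [h1]
      exact (abs_add_le _ _).trans (add_le_add E hS)
    -- power computations
    have huk : u ^ k = ε := by
      rw [hudef, ← Real.rpow_natCast (ε ^ ((k:ℝ)⁻¹)) k, ← Real.rpow_mul (le_of_lt hε0),
        inv_mul_cancel₀ hkR, Real.rpow_one]
    have hmR : (m:ℝ) = (q:ℝ) - 1 := by
      have h1 : (q:ℝ) = (m:ℝ) + 1 := by exact_mod_cast hqm
      linarith
    have humk : u ^ (m * k) = ε ^ ((q:ℝ) - 1) := by
      rw [hudef, ← Real.rpow_natCast (ε ^ ((k:ℝ)⁻¹)) (m*k), ← Real.rpow_mul (le_of_lt hε0)]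
      rw [← hmR]
      congr 1
      push_cast
      field_simp
    have hpowk : h ^ k = r ^ k * ε := by rw [hhdef, mul_pow, huk]
    have hpowM : h ^ M = (r ^ (m*k) * ε ^ ((q:ℝ) - 1)) * (r ^ k * ε) := by
      rw [hMdef, pow_add, hhdef, mul_pow, mul_pow, humk, huk]
    have hεq : ε ^ (q:ℝ) = ε * ε ^ ((q:ℝ) - 1) := by
      have h1 : (q:ℝ) = 1 + ((q:ℝ) - 1) := by ring
      rw [h1]
      rw [Real.rpow_add hε0, Real.rpow_one]
      ring_nf
    set a := ε ^ ((q:ℝ) - 1) with hadef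
    have ha0 : 0 < a := Real.rpow_pos_of_pos hε0 _
    have hrk0 : (0:ℝ) < r ^ k := by positivity
    have hrmk1 : r ^ (m*k) ≤ 1 := pow_le_one₀ (le_of_lt hr0) hr1
    have key : C * h ^ M * B + Wsum * (C₀ * ε ^ (q:ℝ))
        ≤ h ^ k * ((C * B + Wsum * C₀ / r ^ k + 1) * a) := by
      rw [hpowM, hpowk, hεq]
      have eT : (r ^ k * ε) * ((C * B + Wsum * C₀ / r ^ k + 1) * a)
          = (r ^ k * ε) * (C * B) * a + Wsum * C₀ * (ε * a) + r ^ k * ε * a := by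
        field_simp
      rw [eT]
      have hterm : C * ((r ^ (m*k) * a) * (r ^ k * ε)) * B ≤ (r ^ k * ε) * (C * B) * a := by
        have h4 : 0 ≤ C * B * (1 - r ^ (m*k)) * (r ^ k * ε * a) := by
          have := mul_nonneg (mul_nonneg (mul_nonneg hC0 (le_of_lt hB0))
            (by linarith : (0:ℝ) ≤ 1 - r ^ (m*k)))
            (le_of_lt (mul_pos (mul_pos hrk0 hε0) ha0))
          linarith [this]
        linarith [h4]
      have hpos : 0 ≤ r ^ k * ε * a := le_of_lt (mul_pos (mul_pos hrk0 hε0) ha0)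
      linarith [hterm, hpos]
    have hfinal : h ^ k * |pdMulti β (c ε) x|
        ≤ h ^ k * ((C * B + Wsum * C₀ / r ^ k + 1) * a) := by
      have h1 : h ^ k * |pdMulti β (c ε) x| = |h ^ k * pdMulti β (c ε) x| := by
        rw [abs_mul, abs_pow, abs_of_pos hh0]
      rw [h1]
      exact E2.trans key
    have := le_of_mul_le_mul_left hfinal (by positivity : (0:ℝ) < h ^ k)
    exact this
end
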